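/- arXiv:0712.4341 — 10 statements merged into one kernel-verified Lean document; each statement's English description precedes it below -/
import Mathlib

section
/- For every l-valued finite automaton A = (Q, Σ, δ, I, F), the image set of its recognized l-valued language, Im(rec_A) = { r ∈ l : ∃ ω ∈ Σ*, rec_A(ω) = r }, is a finite subset of l. -/
/-- A complete orthomodular lattice. -/
class OrthomodularCompleteLattice (α : Type*) extends CompleteLattice α, Compl α where
  inf_compl_self : ∀ a : α, a ⊓ aᶜ = ⊥
  sup_compl_self : ∀ a : α, a ⊔ aᶜ = ⊤
  compl_compl' : ∀ a : α, aᶜᶜ = a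
  compl_antitone : ∀ a b : α, a ≤ b → bᶜ ≤ aᶜ
  orthomodular : ∀ a b : α, a ≤ b → b = a ⊔ (aᶜ ⊓ b)

/-- An `l`-valued finite automaton (`l`-VFA). -/
structure LVFA (Q A l : Type*) where
  δ : Q → A → Q → l
  init : Q → l
  final : Q → l

/-- The `l`-valued language recognized by an `l`-VFA. -/
def lvfaLang {Q A l : Type*} [OrthomodularCompleteLattice l] (M : LVFA Q A l)
    (w : List A) : l :=
  ⨆ path : Fin (w.length + 1) → Q,
    M.init (path 0) ⊓
      (⨅ i : Fin w.length, M.δ (path i.castSucc) (w.get i) (path i.succ)) ⊓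
      M.final (path (Fin.last w.length))

/-- An `l`-valued deterministic finite automaton (`l`-VDFA). -/
structure LVDFA (Q A l : Type*) where
  next : Q → A → Q
  start : Q
  final : Q → l

/-- The `l`-valued language recognized by an `l`-VDFA. -/
def lvdfaLang {Q A l : Type*} (M : LVDFA Q A l) (w : List A) : l :=
  M.final (w.foldl M.next M.start)

/-- An `l`-valued finite automaton with ε-moves (`ε` is encoded as `none`). -/
structure LVFAe (Q A l : Type*) where
  δ : Q → Option A → Q → l
  init : Q → l
  final : Q → l

/-- The `l`-valued language recognized by an `l`-VFA with ε-moves. -/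
def lvfaeLang {Q A l : Type*} [OrthomodularCompleteLattice l] (M : LVFAe Q A l)
    (w : List A) : l :=
  ⨆ n : ℕ, ⨆ τ : Fin n → Option A, ⨆ _ : (List.ofFn τ).reduceOption = w,
    ⨆ path : Fin (n + 1) → Q,
      M.init (path 0) ⊓
        (⨅ i : Fin n, M.δ (path i.castSucc) (τ i) (path i.succ)) ⊓
        M.final (path (Fin.last n))

/-- An `l`-valued language is `l`-regular if it is recognized by some `l`-VFA. -/
def IsLRegular {A l : Type*} [OrthomodularCompleteLattice l] (f : List A → l) : Prop :=
  ∃ (Q : Type) (_ : Fintype Q) (M : LVFA Q A l), ∀ w, lvfaLang M w = f w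

/-- The image set of the language recognized by an `l`-VFA is finite. -/
theorem finite_image_of_lvfaLang {l Q A : Type*} [OrthomodularCompleteLattice l]
    [Fintype Q] [Fintype A] (M : LVFA Q A l) :
    (Set.range (lvfaLang M)).Finite := by
  classical
  set S : Set l := Set.range M.init ∪ Set.range
      (fun p : Q × A × Q => M.δ p.1 p.2.1 p.2.2) ∪ Set.range M.final with hS
  have hSfin : S.Finite :=
    ((Set.finite_range _).union (Set.finite_range _)).union (Set.finite_range _)
  set T : Set l := (fun s : Finset l => s.inf id) '' {s : Finset l | ↑s ⊆ S} with hT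
  have hsub : {s : Finset l | ↑s ⊆ S}.Finite :=
    hSfin.finite_subsets.preimage (Set.injOn_of_injective Finset.coe_injective)
  have hTfin : T.Finite := hsub.image _
  have hUfin : (sSup '' {X : Set l | X ⊆ T}).Finite := hTfin.finite_subsets.image _
  apply hUfin.subset
  rintro r ⟨w, rfl⟩
  refine ⟨Set.range (fun path : Fin (w.length + 1) → Q =>
    M.init (path 0) ⊓
      (⨅ i : Fin w.length, M.δ (path i.castSucc) (w.get i) (path i.succ)) ⊓
      M.final (path (Fin.last w.length))), ?_, (sSup_range).symm⟩
  rintro x ⟨path, rfl⟩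
  refine ⟨insert (M.init (path 0)) (insert (M.final (path (Fin.last w.length)))
    (Finset.image (fun i : Fin w.length =>
      M.δ (path i.castSucc) (w.get i) (path i.succ)) Finset.univ)), ?_, ?_⟩
  · intro y hy
    simp only [Finset.coe_insert, Set.mem_insert_iff, Finset.coe_image,
      Finset.coe_univ, Set.image_univ, Set.mem_range] at hy
    rcases hy with rfl | rfl | ⟨i, rfl⟩
    · exact Or.inl (Or.inl ⟨_, rfl⟩)
    · exact Or.inr ⟨_, rfl⟩
    · exact Or.inl (Or.inr ⟨(_, _, _), rfl⟩)
  · simp only [Finset.inf_insert, Finset.inf_image, id, Function.comp]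
    rw [Finset.inf_univ_eq_iInf]
    rw [inf_assoc]
    congr 1
    exact inf_comm _ _
end

section
/- For every l-valued finite automaton A = (Q, Σ, δ, I, F) there exists an l-valued deterministic finite automaton B = (Q', Σ, η, s₀, E) such that rec_A = rec_B, i.e. rec_A(ω) = rec_B(ω) for every ω ∈ Σ*. (Such a B is given explicitly by the quantum subset construction: Q' = 2^{Q × (l₁∖{0})} where l₁ is the finite meet-subsemilattice of l generated by Im(δ) ∪ Im(I) ∪ Im(F), s₀ = {(q, I(q)) : q ∈ Q, I(q) ≠ 0}, η(Z, σ) = {(p, r ∧ δ(q,σ,p)) : (q,r) ∈ Z, p ∈ Q, r ∧ δ(q,σ,p) ≠ 0}, and E(Z) = ⋁{ r ∧ F(q) : (q,r) ∈ Z }.) -/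
set_option linter.unusedSectionVars false

section Det

variable {l Q A : Type*} [OrthomodularCompleteLattice l] [Fintype Q] [Fintype A]
  [DecidableEq Q] [DecidableEq A]

/-- generator indices -/
abbrev DetG (Q A : Type*) := Q ⊕ Q × A × Q

def gval (M : LVFA Q A l) : DetG Q A → l
  | .inl q => M.init q
  | .inr (q, a, p) => M.δ q a p

def dgens (w : List A) (path : Fin (w.length + 1) → Q) : Finset (DetG Q A) :=
  Finset.image (fun i : Fin w.length =>
    Sum.inr (path i.castSucc, w.get i, path i.succ)) Finset.univ

def detA (M : LVFA Q A l) : LVDFA (Finset (Q × Finset (DetG Q A))) A l where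
  next Z a := Z.biUnion fun zt =>
    Finset.univ.image fun p => (p, insert (Sum.inr (zt.1, a, p)) zt.2)
  start := Finset.univ.image fun q => (q, {Sum.inl q})
  final Z := Z.sup fun zt => zt.2.inf (gval M) ⊓ M.final zt.1

lemma dgens_cons (a : A) (w : List A) (q0 : Q) (path : Fin (w.length + 1) → Q) :
    dgens (a :: w) (Fin.cons q0 path) =
      insert (Sum.inr (q0, a, path 0)) (dgens w path) := by
  ext x
  simp only [dgens, Finset.mem_image, Finset.mem_univ, true_and, Finset.mem_insert,
    List.length_cons]
  constructor
  · rintro ⟨i, rfl⟩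
    refine Fin.cases ?_ (fun j => ?_) i
    · left; rfl
    · right
      refine ⟨j, ?_⟩
      rw [← Fin.succ_castSucc, Fin.cons_succ, Fin.cons_succ]
      simp
  · rintro (rfl | ⟨i, rfl⟩)
    · exact ⟨0, rfl⟩
    · refine ⟨i.succ, ?_⟩
      rw [← Fin.succ_castSucc, Fin.cons_succ, Fin.cons_succ]
      simp

lemma mem_foldl (M : LVFA Q A l) (w : List A) (Z : Finset (Q × Finset (DetG Q A)))
    (z : Q × Finset (DetG Q A)) :
    z ∈ w.foldl (detA M).next Z ↔
      ∃ zt ∈ Z, ∃ path : Fin (w.length + 1) → Q, path 0 = zt.1 ∧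
        z = (path (Fin.last w.length), zt.2 ∪ dgens w path) := by
  induction w generalizing Z with
  | nil =>
    simp only [List.foldl_nil]
    constructor
    · intro hz
      exact ⟨z, hz, fun _ => z.1, rfl, by simp [dgens]⟩
    · rintro ⟨zt, hzt, path, h0, rfl⟩
      have hl : Fin.last 0 = (0 : Fin 1) := rfl
      simp only [hl, h0, dgens, List.length_nil]
      simpa using hzt
  | cons a w ih =>
    rw [List.foldl_cons, ih]
    simp only [List.length_cons]
    constructor
    · rintro ⟨zt', hzt', path, h0, rfl⟩
      simp only [detA, Finset.mem_biUnion, Finset.mem_image, Finset.mem_univ,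
        true_and] at hzt'
      obtain ⟨zt, hzt, p, rfl⟩ := hzt'
      refine ⟨zt, hzt, Fin.cons zt.1 path, rfl, ?_⟩
      have hd : dgens (a :: w) (Fin.cons zt.1 path) =
          insert (Sum.inr (zt.1, a, path 0)) (dgens w path) := dgens_cons a w zt.1 path
      simp only [List.length_cons] at hd
      rw [hd]
      have hlast : (Fin.cons zt.1 path : Fin (w.length + 1 + 1) → Q) (Fin.last (w.length + 1))
          = path (Fin.last w.length) := by
        rw [← Fin.succ_last, Fin.cons_succ]
      rw [hlast]
      simp only
      rw [h0, Finset.insert_union, Finset.union_insert]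
    · rintro ⟨zt, hzt, path', h0, rfl⟩
      refine ⟨(path' (Fin.succ 0), insert (Sum.inr (zt.1, a, path' (Fin.succ 0))) zt.2), ?_,
        fun i => path' i.succ, rfl, ?_⟩
      · simp only [detA, Finset.mem_biUnion, Finset.mem_image, Finset.mem_univ, true_and]
        exact ⟨zt, hzt, path' (Fin.succ 0), rfl⟩
      · have hc : path' = Fin.cons (path' 0) (fun i => path' i.succ) := by
          funext i
          refine Fin.cases rfl (fun j => ?_) i
          rw [Fin.cons_succ]
        have hd : dgens (a :: w) path' =
            insert (Sum.inr (path' 0, a, path' (Fin.succ 0)))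
              (dgens w (fun i => path' i.succ)) := by
          conv_lhs => rw [hc]
          have := dgens_cons a w (path' 0) (fun i => path' i.succ)
          rw [this]
        rw [hd, h0]
        have hlast : path' (Fin.last (w.length + 1)) = path' ((Fin.last w.length).succ) := by
          rw [Fin.succ_last]
        rw [hlast, Finset.union_insert, Finset.insert_union]

lemma detA_correct (M : LVFA Q A l) (w : List A) :
    lvfaLang M w = lvdfaLang (detA M) w := by
  have hstate : w.foldl (detA M).next (detA M).start =
      Finset.image (fun path : Fin (w.length + 1) → Q =>
        (path (Fin.last w.length), insert (Sum.inl (path 0)) (dgens w path))) Finset.univ := by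
    ext z
    rw [mem_foldl]
    constructor
    · rintro ⟨zt, hzt, path, h0, rfl⟩
      simp only [detA, Finset.mem_image, Finset.mem_univ, true_and] at hzt
      obtain ⟨q, rfl⟩ := hzt
      simp only [Finset.mem_image, Finset.mem_univ, true_and]
      exact ⟨path, by simp [Finset.insert_eq, h0, -Finset.singleton_union]⟩
    · intro hz
      simp only [Finset.mem_image, Finset.mem_univ, true_and] at hz
      obtain ⟨path, rfl⟩ := hz
      refine ⟨(path 0, {Sum.inl (path 0)}), ?_, path, rfl, by simp [Finset.insert_eq, -Finset.singleton_union]⟩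
      simp only [detA, Finset.mem_image, Finset.mem_univ, true_and]
      exact ⟨path 0, rfl⟩
  rw [lvdfaLang]
  show lvfaLang M w = (w.foldl (detA M).next (detA M).start).sup
    fun zt => zt.2.inf (gval M) ⊓ M.final zt.1
  rw [hstate, Finset.sup_image, Finset.sup_univ_eq_iSup, lvfaLang]
  refine iSup_congr fun path => ?_
  simp only [Function.comp]
  rw [Finset.inf_insert]
  have hinf : (dgens w path).inf (gval M) =
      ⨅ i : Fin w.length, M.δ (path i.castSucc) (w.get i) (path i.succ) := by
    rw [dgens, Finset.inf_image, Finset.inf_univ_eq_iInf]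
    rfl
  rw [hinf]
  rfl

end Det
/-- Determinization: every `l`-VFA is equivalent to an `l`-VDFA. -/
theorem lvfa_determinization {l Q A : Type*} [OrthomodularCompleteLattice l]
    [Fintype Q] [Fintype A] (M : LVFA Q A l) :
    ∃ (Q' : Type) (_ : Fintype Q') (B : LVDFA Q' A l),
      ∀ w : List A, lvfaLang M w = lvdfaLang B w := by
  classical
  set S := Finset (Q × Finset (DetG Q A)) with hS
  let e : S ≃ Fin (Fintype.card S) := Fintype.equivFin S
  refine ⟨Fin (Fintype.card S), inferInstance,
    { next := fun s a => e ((detA M).next (e.symm s) a),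
      start := e (detA M).start,
      final := fun s => (detA M).final (e.symm s) }, fun w => ?_⟩
  rw [detA_correct M w]
  unfold lvdfaLang
  simp only
  have : ∀ (Z : S), w.foldl (fun s a => e ((detA M).next (e.symm s) a)) (e Z)
      = e (w.foldl (detA M).next Z) := by
    induction w with
    | nil => intro Z; rfl
    | cons a w ih =>
      intro Z
      simp only [List.foldl_cons]
      rw [← ih ((detA M).next Z a)]
      simp
  rw [this, Equiv.symm_apply_apply]
end

section
/- Let A = (Q, Σ, δ, q₀, F) be an l-valued finite automaton with ε-moves whose transition relation is crisp and has a unique (crisp) initial state q₀, i.e. δ is a function Q × (Σ ∪ {ε}) → 2^Q and rec_A(ω) = ⋁{ F(q) : q ∈ δ*(q₀, ω) } where δ* is the extension of δ via ε-closures. Then there exists an l-valued finite automaton B without ε-moves (with crisp transitions, the same state set, and unique initial state q₀) such that rec_A = rec_B. -/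
/-- The ε-closure of a state under a crisp transition function with ε-moves. -/
def epsClosure {Q A : Type*} (δ : Q → Option A → Set Q) (q : Q) : Set Q :=
  {p | Relation.ReflTransGen (fun x y => y ∈ δ x none) q p}

/-- The extension `δ*` of a crisp transition function with ε-moves, via ε-closures:
`δ*(q, ε) = EC(q)` and `δ*(q, ωσ) = EC(⋃_{p ∈ δ*(q,ω)} δ(p, σ))`. -/
def epsStar {Q A : Type*} (δ : Q → Option A → Set Q) (q : Q) (w : List A) : Set Q :=
  w.foldl (fun S a => ⋃ p ∈ ⋃ s ∈ S, δ s (some a), epsClosure δ p) (epsClosure δ q)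


namespace CrispEpsAux

variable {Q A : Type*}

def derive (D : Q → A → Set Q) : Q → List A → Set Q
  | p, [] => {p}
  | p, a :: w => ⋃ r ∈ D p a, derive D r w

lemma foldl_eps (δ : Q → Option A → Set Q) (w : List A) :
    ∀ S : Set Q,
      w.foldl (fun S a => ⋃ p ∈ ⋃ s ∈ S, δ s (some a), epsClosure δ p)
          (⋃ p ∈ S, epsClosure δ p)
        = ⋃ q ∈ ⋃ p ∈ S,
            derive (fun p a => ⋃ s ∈ epsClosure δ p, δ s (some a)) p w, epsClosure δ q := by
  induction w with
  | nil => intro S; simp [derive]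
  | cons a w ih =>
      intro S
      rw [List.foldl_cons]
      have h1 : (⋃ p ∈ ⋃ s ∈ ⋃ p ∈ S, epsClosure δ p, δ s (some a), epsClosure δ p)
          = ⋃ p ∈ (⋃ p ∈ S, ⋃ s ∈ epsClosure δ p, δ s (some a)), epsClosure δ p := by
        ext q; simp only [Set.mem_iUnion]; tauto
      rw [h1, ih]
      ext q
      simp only [derive, Set.mem_iUnion]
      tauto

lemma derive_iff (D : Q → A → Set Q) (w : List A) :
    ∀ q p : Q, p ∈ derive D q w ↔
      ∃ path : Fin (w.length + 1) → Q, path 0 = q ∧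
        (∀ i : Fin w.length, path i.succ ∈ D (path i.castSucc) (w.get i)) ∧
        path (Fin.last w.length) = p := by
  induction w with
  | nil =>
      intro q p
      constructor
      · intro h
        refine ⟨fun _ => q, rfl, fun i => i.elim0, ?_⟩
        simpa [derive] using h.symm
      · rintro ⟨path, h0, -, hl⟩
        simp only [derive, Set.mem_singleton_iff]
        rw [← hl, ← h0]
        rfl
  | cons a w ih =>
      intro q p
      constructor
      · intro h
        simp only [derive, Set.mem_iUnion] at h
        obtain ⟨r, hr, hp⟩ := h
        obtain ⟨path, h0, hstep, hl⟩ := (ih r p).1 hp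
        refine ⟨Fin.cons q path, rfl, ?_, ?_⟩
        · intro i
          refine Fin.cases ?_ ?_ i
          · simpa [h0] using hr
          · intro j
            simpa using hstep j
        · show (Fin.cons q path : Fin (w.length + 2) → Q) (Fin.last w.length).succ = p
          rw [Fin.cons_succ]; exact hl
      · rintro ⟨path, h0, hstep, hl⟩
        simp only [derive, Set.mem_iUnion]
        refine ⟨path 1, ?_, ?_⟩
        · simpa [h0] using hstep ⟨0, Nat.succ_pos _⟩
        · refine (ih (path 1) p).2 ⟨fun i => path i.succ, rfl, ?_, ?_⟩
          · intro i
            simpa using hstep i.succ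
          · simpa [Fin.last] using hl

end CrispEpsAux

open CrispEpsAux in

/-- Every crisp `l`-valued automaton with ε-moves and unique initial state `q₀` is
equivalent to an `l`-VFA without ε-moves, with crisp transitions, the same state set,
and the same unique initial state. -/
theorem crisp_eps_removal {l Q A : Type*} [OrthomodularCompleteLattice l]
    [Fintype Q] [Fintype A] (δ : Q → Option A → Set Q) (q₀ : Q) (F : Q → l) :
    ∃ B : LVFA Q A l,
      (∀ p a q, B.δ p a q = ⊥ ∨ B.δ p a q = ⊤) ∧
      B.init q₀ = ⊤ ∧ (∀ q, q ≠ q₀ → B.init q = ⊥) ∧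
      ∀ w : List A, lvfaLang B w = ⨆ q ∈ epsStar δ q₀ w, F q := by
  classical
  set D : Q → A → Set Q := fun p a => ⋃ s ∈ epsClosure δ p, δ s (some a) with hD
  refine ⟨⟨fun p a q => if q ∈ D p a then ⊤ else ⊥,
          fun q => if q = q₀ then ⊤ else ⊥,
          fun p => ⨆ q ∈ epsClosure δ p, F q⟩, ?_, ?_, ?_, ?_⟩
  · intro p a q; by_cases h : q ∈ D p a <;> simp [h]
  · simp
  · intro q h; simp [h]
  intro w
  have hstar : epsStar δ q₀ w = ⋃ p ∈ derive D q₀ w, epsClosure δ p := by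
    have h := foldl_eps δ w {q₀}
    simp only [Set.mem_singleton_iff, Set.iUnion_iUnion_eq_left] at h
    exact h
  have hRHS : (⨆ q ∈ epsStar δ q₀ w, F q)
      = ⨆ p ∈ derive D q₀ w, ⨆ q ∈ epsClosure δ p, F q := by
    rw [hstar]
    rw [iSup_iUnion (fun p => ⋃ _ : p ∈ derive D q₀ w, epsClosure δ p) F]
    refine iSup_congr fun p => ?_
    exact iSup_iUnion _ _
  rw [hRHS]
  apply le_antisymm
  · refine iSup_le fun path => ?_
    by_cases h0 : path 0 = q₀
    · by_cases hv : ∀ i : Fin w.length, path i.succ ∈ D (path i.castSucc) (w.get i)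
      · have hmem : path (Fin.last w.length) ∈ derive D q₀ w :=
          (derive_iff D w q₀ _).2 ⟨path, h0, hv, rfl⟩
        refine le_trans inf_le_right ?_
        dsimp only
        exact le_biSup (fun p => ⨆ q ∈ epsClosure δ p, F q) hmem
      · push_neg at hv
        obtain ⟨i, hi⟩ := hv
        refine le_trans inf_le_left (le_trans inf_le_right ?_)
        refine le_trans (iInf_le _ i) (le_trans (le_of_eq ?_) bot_le)
        exact if_neg hi
    · refine le_trans inf_le_left (le_trans inf_le_left ?_)
      simp [h0]
  · refine iSup_le fun p => iSup_le fun hp => ?_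
    obtain ⟨path, h0, hv, hl⟩ := (derive_iff D w q₀ p).1 hp
    refine le_trans ?_ (le_iSup _ path)
    have h1 : (if path 0 = q₀ then (⊤ : l) else ⊥) = ⊤ := if_pos h0
    have h2 : (⨅ i : Fin w.length,
        if path i.succ ∈ D (path i.castSucc) (w.get i) then (⊤ : l) else ⊥) = ⊤ := by
      refine le_antisymm le_top (le_iInf fun i => ?_)
      rw [if_pos (hv i)]
    dsimp only
    rw [h1, h2, hl]
    simp
end

section
/- For every l-valued finite automaton with ε-moves A = (Q, Σ, δ, I, F) (with arbitrary l-valued transition relation δ : Q × (Σ ∪ {ε}) × Q → l and l-valued initial states I), there exists an l-valued finite automaton with ε-moves B whose transition relation is crisp (a function P × (Σ ∪ {ε}) → 2^P) and which has a unique initial state, such that rec_A = rec_B. -/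
namespace LvfaeCrisp

open Classical in
/-- Set of "used transitions", encoded over `Fin` so that the state type lives in `Type 0`. -/
def TSet (n m : ℕ) : Type := Fin n → Fin m → Fin n → Prop

def emptyT {n m : ℕ} : TSet n m := fun _ _ _ => False

def addT {n m : ℕ} (t : TSet n m) (x : Fin n) (j : Fin m) (y : Fin n) : TSet n m :=
  fun a i b => t a i b ∨ (a = x ∧ i = j ∧ b = y)

variable {l A : Type*} [OrthomodularCompleteLattice l]

/-- The lattice value accumulated by a `TSet`. -/
def tVal {n m : ℕ} (M : LVFAe (Fin n) A l) (e : Option A → Fin m) (t : TSet n m) : l :=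
  ⨅ x, ⨅ σ : Option A, ⨅ y, ⨅ _ : t x (e σ) y, M.δ x σ y

lemma tVal_le {n m : ℕ} (M : LVFAe (Fin n) A l) (e : Option A → Fin m) {t : TSet n m}
    {x y : Fin n} {σ : Option A} (h : t x (e σ) y) : tVal M e t ≤ M.δ x σ y :=
  (iInf_le _ x).trans <| (iInf_le _ σ).trans <| (iInf_le _ y).trans <| iInf_le _ h

open Classical in
/-- Crisp automaton with unique initial state equivalent to `M`. -/
noncomputable def crisp {n m : ℕ} (M : LVFAe (Fin n) A l) (e : Option A → Fin m) :
    LVFAe (Option (Fin n × Fin n × TSet n m)) A l where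
  δ p σ p' :=
    match p, p' with
    | none, some s => if σ = none ∧ s.1 = s.2.1 ∧ s.2.2 = emptyT then ⊤ else ⊥
    | some s, some s' => if s'.1 = s.1 ∧ s'.2.2 = addT s.2.2 s.2.1 (e σ) s'.2.1 then ⊤ else ⊥
    | _, none => ⊥
  init p := if p = none then ⊤ else ⊥
  final p :=
    match p with
    | none => ⊥
    | some s => M.init s.1 ⊓ tVal M e s.2.2 ⊓ M.final s.2.1

lemma crisp_lang {n m : ℕ} (M : LVFAe (Fin n) A l) (e : Option A → Fin m)
    (he : Function.Injective e) (w : List A) :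
    lvfaeLang M w = lvfaeLang (crisp M e) w := by
  classical
  apply le_antisymm
  · -- every run of M is simulated by a run of crisp M
    refine iSup_le fun k => iSup_le fun τ => iSup_le fun hred => iSup_le fun path => ?_
    set tk : Fin (k + 1) → TSet n m := fun c x j y =>
      ∃ i : Fin k, (i : ℕ) < (c : ℕ) ∧ path i.castSucc = x ∧ e (τ i) = j ∧ path i.succ = y
      with htk
    set τ' : Fin (k + 1) → Option A := Fin.cases none τ with hτ'
    set path' : Fin (k + 2) → Option (Fin n × Fin n × TSet n m) :=
      Fin.cases none (fun i : Fin (k + 1) => some (path 0, path i, tk i)) with hpath'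
    have hred' : (List.ofFn τ').reduceOption = w := by
      rw [List.ofFn_succ]
      simp only [hτ', Fin.cases_zero, Fin.cases_succ, List.reduceOption_cons_of_none]
      exact hred
    refine le_trans ?_
      (le_iSup_of_le (k + 1) <| le_iSup_of_le τ' <| le_iSup_of_le hred' <|
        le_iSup _ path')
    refine le_inf (le_inf ?_ ?_) ?_
    · have : (crisp M e).init (path' 0) = ⊤ := by
        simp [crisp, hpath', Fin.cases_zero]
      rw [this]; exact le_top
    · refine le_iInf fun i => ?_
      have hi : (crisp M e).δ (path' i.castSucc) (τ' i) (path' i.succ) = ⊤ := by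
        induction i using Fin.cases with
        | zero =>
          have h1 : path' (Fin.succ (0 : Fin (k + 1))) = some (path 0, path 0, tk 0) :=
            Fin.cases_succ _
          have h0 : path' ((0 : Fin (k + 1)).castSucc) = none := by
            simp [hpath', Fin.castSucc_zero, Fin.cases_zero]
          rw [h0, h1]
          have hempty : tk (0 : Fin (k + 1)) = emptyT := by
            funext x j y
            simp [htk, emptyT]
          simp [crisp, hempty, hτ', Fin.cases_zero]
        | succ j =>
          have h1 : path' (Fin.succ j).castSucc = some (path 0, path j.castSucc, tk j.castSucc) := by
            rw [← Fin.succ_castSucc]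
            exact Fin.cases_succ _
          have h2 : path' (Fin.succ j).succ = some (path 0, path j.succ, tk j.succ) :=
            Fin.cases_succ _
          have h3 : τ' j.succ = τ j := Fin.cases_succ _
          rw [h1, h2, h3]
          have hadd : tk j.succ = addT (tk j.castSucc) (path j.castSucc) (e (τ j)) (path j.succ) := by
            funext x jj y
            rw [htk]
            simp only [addT, eq_iff_iff]
            constructor
            · rintro ⟨i, hi, hx, hj, hy⟩
              rcases Nat.lt_succ_iff_lt_or_eq.mp (by rw [Fin.val_succ] at hi; exact hi) with hlt | heq
              · exact Or.inl ⟨i, by simpa using hlt, hx, hj, hy⟩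
              · have : i = j := Fin.ext heq
                subst this
                exact Or.inr ⟨hx.symm, hj.symm, hy.symm⟩
            · rintro (⟨i, hi, hx, hj, hy⟩ | ⟨hx, hj, hy⟩)
              · exact ⟨i, by simp at hi ⊢; omega, hx, hj, hy⟩
              · exact ⟨j, by simp, hx.symm, hj.symm, hy.symm⟩
          simp [crisp, hadd]
      rw [hi]; exact le_top
    · have hlast : path' (Fin.last (k + 1)) =
          some (path 0, path (Fin.last k), tk (Fin.last k)) := by
        rw [← Fin.succ_last]
        exact Fin.cases_succ _
      rw [hlast]
      show _ ≤ M.init (path 0) ⊓ tVal M e (tk (Fin.last k)) ⊓ M.final (path (Fin.last k))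
      refine inf_le_inf_right _ (inf_le_inf_left _ ?_)
      refine le_iInf fun x => le_iInf fun σ => le_iInf fun y => le_iInf fun h => ?_
      obtain ⟨i, -, hx, hj, hy⟩ := h
      have hτi : τ i = σ := he hj
      refine (iInf_le _ i).trans ?_
      rw [hx, hτi, hy]
  · -- every run of crisp M is dominated by a run of M
    refine iSup_le fun N => iSup_le fun τ' => iSup_le fun hred => iSup_le fun path' => ?_
    by_cases h0 : path' 0 = none
    swap
    · have : (crisp M e).init (path' 0) = ⊥ := by simp [crisp, h0]
      calc _ ≤ (crisp M e).init (path' 0) := inf_le_left.trans inf_le_left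
        _ = ⊥ := this
        _ ≤ _ := bot_le
    cases N with
    | zero =>
      have : (crisp M e).final (path' (Fin.last 0)) = ⊥ := by
        have : path' (Fin.last 0) = none := by
          rw [show (Fin.last 0) = (0 : Fin 1) from rfl]; exact h0
        rw [this]; rfl
      calc _ ≤ (crisp M e).final (path' (Fin.last 0)) := inf_le_right
        _ = ⊥ := this
        _ ≤ _ := bot_le
    | succ m' =>
      by_cases hbad : ∃ i : Fin (m' + 1),
          (crisp M e).δ (path' i.castSucc) (τ' i) (path' i.succ) = ⊥
      · obtain ⟨i, hi⟩ := hbad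
        calc _ ≤ ⨅ i : Fin (m' + 1), (crisp M e).δ (path' i.castSucc) (τ' i) (path' i.succ) :=
              inf_le_left.trans inf_le_right
          _ ≤ (crisp M e).δ (path' i.castSucc) (τ' i) (path' i.succ) := iInf_le _ i
          _ = ⊥ := hi
          _ ≤ _ := bot_le
      push_neg at hbad
      -- first transition: from `none` via ε to `(q₀, q₀, emptyT)`
      have hg0 := hbad 0
      rw [Fin.castSucc_zero, h0] at hg0
      obtain ⟨s1, hp1⟩ : ∃ s1, path' (Fin.succ (0 : Fin (m' + 1))) = some s1 := by
        cases hps : path' (Fin.succ (0 : Fin (m' + 1))) with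
        | none => rw [hps] at hg0; exact absurd rfl hg0
        | some s => exact ⟨s, rfl⟩
      rw [hp1] at hg0
      have hc1 : τ' 0 = none ∧ s1.1 = s1.2.1 ∧ s1.2.2 = emptyT := by
        by_cases hc : τ' 0 = none ∧ s1.1 = s1.2.1 ∧ s1.2.2 = emptyT
        · exact hc
        · exfalso; apply hg0; simp only [crisp]; rw [if_neg hc]
      obtain ⟨hτ0, hqq, hte⟩ := hc1
      obtain ⟨q₀, q₀', t₀⟩ := s1
      simp only at hqq hte
      subst hqq; subst hte
      set stQ : Option (Fin n × Fin n × TSet n m) → Fin n :=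
        fun p => (p.getD (q₀, q₀, emptyT)).2.1 with hstQ
      set pM : Fin (m' + 1) → Fin n := fun j => stQ (path' j.succ) with hpM
      -- main invariant, by induction along the run
      have claim : ∀ k : ℕ, ∀ _hk : k < m' + 1, ∃ q t,
          path' ⟨k + 1, by omega⟩ = some (q₀, q, t) ∧
          ∀ i : Fin m', (i : ℕ) < k → t (pM i.castSucc) (e (τ' i.succ)) (pM i.succ) := by
        intro k
        induction k with
        | zero =>
          intro _
          refine ⟨q₀, emptyT, ?_, fun i hi => absurd hi (by omega)⟩
          rw [show (⟨0 + 1, by omega⟩ : Fin (m' + 2)) = Fin.succ (0 : Fin (m' + 1)) from rfl]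
          exact hp1
        | succ k ih =>
          intro hk
          obtain ⟨q, t, hp, ht⟩ := ih (by omega)
          have hg := hbad ⟨k + 1, by omega⟩
          rw [Fin.castSucc_mk, Fin.succ_mk] at hg
          rw [hp] at hg
          obtain ⟨s', hp2⟩ : ∃ s', path' ⟨k + 1 + 1, by omega⟩ = some s' := by
            cases hps : path' ⟨k + 1 + 1, by omega⟩ with
            | none => rw [hps] at hg; exact absurd rfl hg
            | some s => exact ⟨s, rfl⟩
          rw [hp2] at hg
          have hc : s'.1 = q₀ ∧ s'.2.2 = addT t q (e (τ' ⟨k + 1, by omega⟩)) s'.2.1 := by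
            by_cases hc : s'.1 = (q₀, q, t).1 ∧
                s'.2.2 = addT (q₀, q, t).2.2 (q₀, q, t).2.1 (e (τ' ⟨k + 1, by omega⟩)) s'.2.1
            · exact hc
            · exfalso; apply hg; simp only [crisp]; rw [if_neg hc]
          obtain ⟨a', b', t'⟩ := s'
          obtain ⟨ha', ht'⟩ := hc
          simp only at ha' ht'
          subst ha'
          have hpMk : pM ⟨k, by omega⟩ = q := by
            rw [hpM]; simp only [hstQ, Fin.succ_mk]
            rw [hp]; rfl
          have hpMk1 : pM ⟨k + 1, by omega⟩ = b' := by
            rw [hpM]; simp only [hstQ, Fin.succ_mk]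
            rw [hp2]; rfl
          refine ⟨b', t', hp2, fun i hi => ?_⟩
          rw [ht']
          rcases Nat.lt_succ_iff_lt_or_eq.mp hi with hlt | heq
          · exact Or.inl (ht i hlt)
          · have hieq : i = (⟨k, by omega⟩ : Fin m') := Fin.ext heq
            rw [hieq]
            refine Or.inr ⟨?_, ?_, ?_⟩
            · rw [Fin.castSucc_mk]; exact hpMk
            · rw [Fin.succ_mk]
            · rw [Fin.succ_mk]; exact hpMk1
      obtain ⟨q, t, hp, ht⟩ := claim m' (by omega)
      have hpM0 : pM 0 = q₀ := by
        rw [hpM]; simp only [hstQ]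
        rw [show Fin.succ (0 : Fin (m' + 1)) = Fin.succ 0 from rfl, hp1]; rfl
      have hpMlast : pM (Fin.last m') = q := by
        rw [hpM]; simp only [hstQ]
        rw [show (Fin.last m').succ = (⟨m' + 1, by omega⟩ : Fin (m' + 2)) from rfl, hp]; rfl
      have hred2 : (List.ofFn fun i : Fin m' => τ' i.succ).reduceOption = w := by
        rw [List.ofFn_succ, hτ0, List.reduceOption_cons_of_none] at hred
        exact hred
      refine le_trans ?_
        (le_iSup_of_le m' <| le_iSup_of_le (fun i : Fin m' => τ' i.succ) <|
          le_iSup_of_le hred2 <| le_iSup _ pM)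
      have hfin : (crisp M e).final (path' (Fin.last (m' + 1))) =
          M.init q₀ ⊓ tVal M e t ⊓ M.final q := by
        rw [show Fin.last (m' + 1) = (⟨m' + 1, by omega⟩ : Fin (m' + 2)) from rfl, hp]
        rfl
      calc _ ≤ (crisp M e).final (path' (Fin.last (m' + 1))) := inf_le_right
        _ = M.init q₀ ⊓ tVal M e t ⊓ M.final q := hfin
        _ ≤ M.init (pM 0) ⊓ (⨅ i : Fin m', M.δ (pM i.castSucc) (τ' i.succ) (pM i.succ)) ⊓
              M.final (pM (Fin.last m')) := by
            rw [hpM0, hpMlast]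
            refine inf_le_inf_right _ (inf_le_inf_left _ ?_)
            exact le_iInf fun i => tVal_le M e (ht i i.isLt)
        _ ≤ _ := le_refl _

end LvfaeCrisp

/-- Every `l`-VFA with ε-moves is equivalent to one with crisp transitions and a unique
initial state. -/
theorem lvfae_to_crisp {l Q A : Type*} [OrthomodularCompleteLattice l]
    [Fintype Q] [Fintype A] (M : LVFAe Q A l) :
    ∃ (P : Type) (_ : Fintype P) (B : LVFAe P A l),
      (∀ p a q, B.δ p a q = ⊥ ∨ B.δ p a q = ⊤) ∧
      (∃ p₀ : P, B.init p₀ = ⊤ ∧ ∀ p, p ≠ p₀ → B.init p = ⊥) ∧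
      ∀ w : List A, lvfaeLang M w = lvfaeLang B w := by
  classical
  obtain ⟨eQ⟩ : Nonempty (Q ≃ Fin (Fintype.card Q)) := ⟨Fintype.equivFin Q⟩
  set M' : LVFAe (Fin (Fintype.card Q)) A l :=
    ⟨fun x σ y => M.δ (eQ.symm x) σ (eQ.symm y), fun x => M.init (eQ.symm x),
      fun x => M.final (eQ.symm x)⟩ with hM'
  have htrans : ∀ w, lvfaeLang M w = lvfaeLang M' w := by
    intro w
    unfold lvfaeLang
    refine iSup_congr fun k => iSup_congr fun τ => iSup_congr fun hr => ?_
    have := Equiv.iSup_comp (α := l)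
      (e := (Equiv.refl (Fin (k + 1))).arrowCongr eQ.symm)
      (g := fun path : Fin (k + 1) → Q =>
        M.init (path 0) ⊓ (⨅ i : Fin k, M.δ (path i.castSucc) (τ i) (path i.succ)) ⊓
          M.final (path (Fin.last k)))
    rw [← this]
    refine iSup_congr fun path => ?_
    simp [hM', Equiv.arrowCongr]
  refine ⟨Option (Fin (Fintype.card Q) × Fin (Fintype.card Q) ×
      LvfaeCrisp.TSet (Fintype.card Q) (Fintype.card (Option A))), ?_,
    LvfaeCrisp.crisp M' ⇑(Fintype.equivFin (Option A)), ?_, ⟨none, ?_, ?_⟩, ?_⟩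
  · have : Fintype (LvfaeCrisp.TSet (Fintype.card Q) (Fintype.card (Option A))) := by
      unfold LvfaeCrisp.TSet; infer_instance
    infer_instance
  · intro p a q
    cases p with
    | none =>
      cases q with
      | none => left; rfl
      | some s =>
        simp only [LvfaeCrisp.crisp]
        split
        · right; rfl
        · left; rfl
    | some s =>
      cases q with
      | none => left; rfl
      | some s' =>
        simp only [LvfaeCrisp.crisp]
        split
        · right; rfl
        · left; rfl
  · simp [LvfaeCrisp.crisp]
  · intro p hp
    simp [LvfaeCrisp.crisp, hp]
  · intro w
    rw [htrans w,
      LvfaeCrisp.crisp_lang M' ⇑(Fintype.equivFin (Option A))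
        (Fintype.equivFin (Option A)).injective w]
end

section
/- For every l-valued finite automaton with ε-moves A, there exists an l-valued finite automaton B (without ε-moves) such that rec_A = rec_B. -/
namespace EpsElim

variable {Q A l β : Type*} [OrthomodularCompleteLattice l]

/-- value of a chain of transitions -/
def chain (d : Q → β → Q → l) : Q → List (β × Q) → l
  | _, [] => ⊤
  | q, (b, q') :: rest => d q b q' ⊓ chain d q' rest

/-- last state of a chain -/
def lastSt : Q → List (β × Q) → Q
  | q, [] => q
  | _, (_, q') :: rest => lastSt q' rest

@[simp] lemma chain_nil (d : Q → β → Q → l) (q : Q) : chain d q [] = ⊤ := rfl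
@[simp] lemma chain_cons (d : Q → β → Q → l) (q : Q) (b : β) (q' : Q) (L : List (β × Q)) :
    chain d q ((b, q') :: L) = d q b q' ⊓ chain d q' L := rfl
@[simp] lemma lastSt_nil (q : Q) : lastSt q ([] : List (β × Q)) = q := rfl
@[simp] lemma lastSt_cons (q : Q) (b : β) (q' : Q) (L : List (β × Q)) :
    lastSt q ((b, q') :: L) = lastSt q' L := rfl

lemma chain_append (d : Q → β → Q → l) (q : Q) (L1 L2 : List (β × Q)) :
    chain d q (L1 ++ L2) = chain d q L1 ⊓ chain d (lastSt q L1) L2 := by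
  induction L1 generalizing q with
  | nil => simp
  | cons p L ih => cases p; simp [ih, inf_assoc]

lemma lastSt_append (q : Q) (L1 L2 : List (β × Q)) :
    lastSt q (L1 ++ L2) = lastSt (lastSt q L1) L2 := by
  induction L1 generalizing q with
  | nil => simp
  | cons p L ih => cases p; simp [ih]

lemma iInf_fin_succ {n : ℕ} (f : Fin (n + 1) → l) :
    ⨅ i, f i = f 0 ⊓ ⨅ i : Fin n, f i.succ := by
  apply le_antisymm
  · exact le_inf (iInf_le _ 0) (le_iInf fun i => iInf_le _ i.succ)
  · refine le_iInf fun i => ?_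
    induction i using Fin.cases with
    | zero => exact inf_le_left
    | succ j => exact inf_le_right.trans (iInf_le _ j)

lemma chain_ofFn (d : Q → β → Q → l) (n : ℕ) (τ : Fin n → β) (path : Fin (n + 1) → Q) :
    chain d (path 0) (List.ofFn fun i => (τ i, path i.succ)) =
      ⨅ i : Fin n, d (path i.castSucc) (τ i) (path i.succ) := by
  induction n with
  | zero => simp [List.ofFn_zero, iInf_of_empty]
  | succ n ih =>
    have h2 := ih (fun i => τ i.succ) (fun i => path i.succ)
    simp only [Fin.succ_castSucc] at h2
    rw [List.ofFn_succ, chain_cons,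
      iInf_fin_succ (fun i => d (path i.castSucc) (τ i) (path i.succ)), Fin.castSucc_zero]
    rw [h2]

lemma lastSt_ofFn (n : ℕ) (τ : Fin n → β) (path : Fin (n + 1) → Q) :
    lastSt (path 0) (List.ofFn fun i => (τ i, path i.succ)) = path (Fin.last n) := by
  induction n with
  | zero => simp
  | succ n ih =>
    have h2 := ih (fun i => τ i.succ) (fun i => path i.succ)
    rw [List.ofFn_succ, lastSt_cons]
    rw [h2, Fin.succ_last]


def eLang (M : LVFAe Q A l) (w : List A) : l :=
  ⨆ q0 : Q, ⨆ steps : List (Option A × Q),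
    ⨆ _ : (steps.map Prod.fst).reduceOption = w,
      M.init q0 ⊓ chain M.δ q0 steps ⊓ M.final (lastSt q0 steps)

def nLang (B : LVFA Q A l) (w : List A) : l :=
  ⨆ q0 : Q, ⨆ steps : List (A × Q), ⨆ _ : steps.map Prod.fst = w,
    B.init q0 ⊓ chain B.δ q0 steps ⊓ B.final (lastSt q0 steps)

lemma lvfaeLang_eq_eLang (M : LVFAe Q A l) (w : List A) :
    lvfaeLang M w = eLang M w := by
  apply le_antisymm
  · refine iSup_le fun n => iSup_le fun τ => iSup_le fun h => iSup_le fun path => ?_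
    refine le_iSup_of_le (path 0) ?_
    refine le_iSup_of_le (List.ofFn fun i => (τ i, path i.succ)) ?_
    have hm : ((List.ofFn fun i => (τ i, path i.succ)).map Prod.fst).reduceOption = w := by
      rw [List.map_ofFn]
      exact h
    refine le_iSup_of_le hm ?_
    rw [chain_ofFn, lastSt_ofFn]
  · refine iSup_le fun q0 => iSup_le fun steps => iSup_le fun h => ?_
    set n := steps.length with hn
    set path : Fin (n + 1) → Q := fun i => (q0 :: steps.map Prod.snd).getD i.val q0 with hpath
    set τ : Fin n → Option A := fun i => (steps.get i).1 with hτ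
    have hsteps : steps = List.ofFn fun i => (τ i, path i.succ) := by
      refine List.ext_getElem (by simp [hn]) fun i h1 h2 => ?_
      simp only [List.getElem_ofFn]
      refine Prod.ext ?_ ?_
      · simp [hτ]
      · simp only [hpath, Fin.val_succ, List.getD_cons_succ]
        rw [List.getD_eq_getElem _ _ (by simpa using h1)]
        simp
    have hp0 : path 0 = q0 := by simp [hpath]
    have hred : (List.ofFn τ).reduceOption = w := by
      rw [← h]
      congr 1
      refine List.ext_getElem (by simp [hn]) fun i h1 h2 => ?_
      simp [hτ]
    refine le_iSup_of_le n (le_iSup_of_le τ (le_iSup_of_le hred (le_iSup_of_le path ?_)))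
    rw [← chain_ofFn M.δ n τ path, ← lastSt_ofFn n τ path, ← hsteps, hp0]

lemma lvfaLang_eq_nLang (B : LVFA Q A l) (w : List A) :
    lvfaLang B w = nLang B w := by
  apply le_antisymm
  · refine iSup_le fun path => ?_
    refine le_iSup_of_le (path 0) ?_
    refine le_iSup_of_le (List.ofFn fun i => (w.get i, path i.succ)) ?_
    have hm : ((List.ofFn fun i => (w.get i, path i.succ)).map Prod.fst) = w := by
      rw [List.map_ofFn]
      exact List.ofFn_get w
    refine le_iSup_of_le hm ?_
    rw [chain_ofFn, lastSt_ofFn]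
  · refine iSup_le fun q0 => iSup_le fun steps => iSup_le fun h => ?_
    subst h
    have hl : steps.length = (steps.map Prod.fst).length := by simp
    set w := steps.map Prod.fst with hw
    set path : Fin (w.length + 1) → Q := fun i => (q0 :: steps.map Prod.snd).getD i.val q0
      with hpath
    have hsteps : steps = List.ofFn fun i : Fin w.length => (w.get i, path i.succ) := by
      refine List.ext_getElem (by simp [hl]) fun i h1 h2 => ?_
      simp only [List.getElem_ofFn]
      refine Prod.ext ?_ ?_
      · simp [hw]
      · simp only [hpath, Fin.val_succ, List.getD_cons_succ]
        rw [List.getD_eq_getElem _ _ (by simpa using h1)]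
        simp
    have hp0 : path 0 = q0 := by simp [hpath]
    refine le_iSup_of_le path ?_
    rw [← chain_ofFn B.δ w.length _ path, ← lastSt_ofFn w.length (fun i => w.get i) path,
      ← hsteps, hp0]

section Build

variable (A)

/-- New state type: an ε-run of bounded length. -/
abbrev QE (Q : Type*) [Fintype Q] : Type _ :=
  Fin (Fintype.card Q) × (Fin (Fintype.card Q) → Q)

variable {A}

def st0 {Q : Type*} [Fintype Q] (s : QE Q) : Q :=
  s.2 ⟨0, Nat.lt_of_le_of_lt (Nat.zero_le _) s.1.isLt⟩

def stE {Q : Type*} [Fintype Q] (s : QE Q) : Q := s.2 s.1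

def runL {Q : Type*} [Fintype Q] (s : QE Q) : List Q :=
  List.ofFn fun i : Fin s.1.val => s.2 ⟨i.val + 1, Nat.lt_of_le_of_lt i.isLt s.1.isLt⟩

variable (A) in
def epsL {Q : Type*} (r : List Q) : List (Option A × Q) :=
  r.map fun p => ((none : Option A), p)

@[simp] lemma epsL_nil {Q : Type*} : epsL A ([] : List Q) = [] := rfl
@[simp] lemma epsL_cons {Q : Type*} (q : Q) (r : List Q) :
    epsL A (q :: r) = ((none : Option A), q) :: epsL A r := rfl
@[simp] lemma epsL_append {Q : Type*} (r r' : List Q) :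
    epsL A (r ++ r') = epsL A r ++ epsL A r' := by simp [epsL]

variable [Fintype Q]

def runsVal (M : LVFAe Q A l) (s : QE Q) : l := chain M.δ (st0 s) (epsL A (runL s))

def infRun (M : LVFAe Q A l) (f : ℕ → Q) (k : ℕ) : l :=
  ⨅ i : Fin k, M.δ (f i) none (f (i + 1))

lemma chain_eps_fun (M : LVFAe Q A l) (k : ℕ) (f : ℕ → Q) :
    chain M.δ (f 0) (epsL A (List.ofFn fun i : Fin k => f (i.val + 1))) = infRun M f k := by
  induction k generalizing f with
  | zero =>
    simp only [infRun]
    simp only [List.ofFn_zero, epsL_nil, chain_nil]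
    exact (iInf_of_empty _).symm
  | succ k ih =>
    have h2 := ih (fun m => f (m + 1))
    rw [List.ofFn_succ, epsL_cons, chain_cons]
    simp only [Fin.val_zero, Fin.val_succ]
    rw [h2]
    simp only [infRun,
      iInf_fin_succ (fun i : Fin (k + 1) => M.δ (f i) none (f (i + 1))),
      Fin.val_zero, Fin.val_succ]

lemma lastSt_eps_fun (k : ℕ) (f : ℕ → Q) :
    lastSt (f 0) (epsL A (List.ofFn fun i : Fin k => f (i.val + 1))) = f k := by
  induction k generalizing f with
  | zero => simp
  | succ k ih =>
    have h2 := ih (fun m => f (m + 1))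
    rw [List.ofFn_succ, epsL_cons, lastSt_cons]
    simp only [Fin.val_zero, Fin.val_succ]
    exact h2

/-- extension of a state of `QE Q` to a function `ℕ → Q` -/
def extF (s : QE Q) : ℕ → Q :=
  fun i => if h : i < Fintype.card Q then s.2 ⟨i, h⟩ else stE s

lemma extF_zero (s : QE Q) : extF s 0 = st0 s := by
  have h0 : (0 : ℕ) < Fintype.card Q := Nat.lt_of_le_of_lt (Nat.zero_le _) s.1.isLt
  simp [extF, h0, st0]

lemma extF_top (s : QE Q) : extF s s.1.val = stE s := by
  simp [extF, s.1.isLt, stE]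

lemma runL_eq_ofFn (s : QE Q) :
    runL s = List.ofFn fun i : Fin s.1.val => extF s (i.val + 1) := by
  unfold runL
  congr 1
  funext i
  have h : i.val + 1 < Fintype.card Q := Nat.lt_of_le_of_lt i.isLt s.1.isLt
  simp [extF, h]

lemma runsVal_eq (M : LVFAe Q A l) (s : QE Q) :
    runsVal M s = infRun M (extF s) s.1.val := by
  rw [runsVal, runL_eq_ofFn, ← extF_zero s, chain_eps_fun]

lemma lastSt_runL (s : QE Q) :
    lastSt (st0 s) (epsL A (runL s)) = stE s := by
  rw [runL_eq_ofFn, ← extF_zero s, lastSt_eps_fun, extF_top]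

/-- splice out a loop -/
lemma splice (M : LVFAe Q A l) (f : ℕ → Q) (k i j : ℕ) (hij : i < j) (hjk : j ≤ k)
    (hf : f i = f j) :
    ∃ g : ℕ → Q, g 0 = f 0 ∧ g (k - (j - i)) = f k ∧
      infRun M f k ≤ infRun M g (k - (j - i)) ∧ k - (j - i) < k := by
  set d := j - i with hd
  set k2 := k - d with hk2
  refine ⟨fun m => if m ≤ i then f m else f (m + d), by simp, ?_, ?_, by omega⟩
  · by_cases h : k2 ≤ i
    · have hki : k2 = i := by omega
      have hjk' : j = k := by omega
      beta_reduce
      rw [if_pos h, hki, hf, hjk']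
    · have hkd : k2 + d = k := by omega
      beta_reduce
      rw [if_neg h, hkd]
  · refine le_iInf fun m => ?_
    have hmk2 : m.val < k2 := m.isLt
    by_cases hmi : m.val < i
    · have h1 : m.val ≤ i := le_of_lt hmi
      have h2 : m.val + 1 ≤ i := hmi
      have hm' : m.val < k := by omega
      have := iInf_le (fun i : Fin k => M.δ (f i) none (f (i + 1))) ⟨m.val, hm'⟩
      simpa [infRun, if_pos h1, if_pos h2, hmi] using this
    · have hm' : m.val + d < k := by omega
      have hgm : (if m.val ≤ i then f m.val else f (m.val + d)) = f (m.val + d) := by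
        by_cases h : m.val ≤ i
        · have : m.val = i := by omega
          rw [if_pos h, this, hf]
          congr 1
          omega
        · rw [if_neg h]
      have hgm1 : (if m.val + 1 ≤ i then f (m.val + 1) else f (m.val + 1 + d)) =
          f (m.val + d + 1) := by
        rw [if_neg (by omega)]
        congr 1
        omega
      have := iInf_le (fun i : Fin k => M.δ (f i) none (f (i + 1))) ⟨m.val + d, hm'⟩
      simp only at this ⊢
      rw [hgm, hgm1]
      exact this

lemma funCut (M : LVFAe Q A l) (k : ℕ) (f : ℕ → Q) :
    ∃ (k' : ℕ) (f' : ℕ → Q), k' < Fintype.card Q ∧ f' 0 = f 0 ∧ f' k' = f k ∧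
      infRun M f k ≤ infRun M f' k' := by
  induction k using Nat.strong_induction_on generalizing f with
  | _ k ih =>
    by_cases hk : k < Fintype.card Q
    · exact ⟨k, f, hk, rfl, rfl, le_rfl⟩
    · push_neg at hk
      have hcard : Fintype.card Q < Fintype.card (Fin (k + 1)) := by
        simpa using by omega
      obtain ⟨x, y, hxy, hfxy⟩ :=
        Fintype.exists_ne_map_eq_of_card_lt (fun i : Fin (k + 1) => f i.val) hcard
      have hij : ∃ i j : ℕ, i < j ∧ j ≤ k ∧ f i = f j := by
        rcases Ne.lt_or_gt hxy with h | h
        · exact ⟨x.val, y.val, h, by omega, hfxy⟩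
        · exact ⟨y.val, x.val, h, by omega, hfxy.symm⟩
      obtain ⟨i, j, hij', hjk, hf⟩ := hij
      obtain ⟨g, hg0, hgk, hle, hlt⟩ := splice M f k i j hij' hjk hf
      obtain ⟨k', f', hk', h0, hE, hle'⟩ := ih _ hlt g
      exact ⟨k', f', hk', h0.trans hg0, hE.trans hgk, hle.trans hle'⟩

/-- cut an arbitrary ε-run down to a bounded-length state -/
lemma cut (M : LVFAe Q A l) (q : Q) (r : List Q) :
    ∃ s : QE Q, st0 s = q ∧ stE s = lastSt q (epsL A r) ∧
      chain M.δ q (epsL A r) ≤ runsVal M s := by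
  set f : ℕ → Q := fun i => (q :: r).getD i q with hfdef
  have hf0 : f 0 = q := by simp [hfdef]
  have hr : r = List.ofFn fun i : Fin r.length => f (i.val + 1) := by
    refine List.ext_getElem (by simp) fun i h1 h2 => ?_
    simp only [List.getElem_ofFn, hfdef, List.getD_cons_succ]
    rw [List.getD_eq_getElem _ _ h1]
  have hchain : chain M.δ q (epsL A r) = infRun M f r.length := by
    conv_lhs => rw [hr, ← hf0]
    exact chain_eps_fun M r.length f
  have hlast : lastSt q (epsL A r) = f r.length := by
    conv_lhs => rw [hr, ← hf0]
    exact lastSt_eps_fun r.length f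
  obtain ⟨k', f', hk', h0, hE, hle⟩ := funCut M r.length f
  refine ⟨(⟨k', hk'⟩, fun i => f' i.val), ?_, ?_, ?_⟩
  · rw [show st0 ((⟨k', hk'⟩, fun i => f' i.val) : QE Q) = f' 0 from rfl, h0, hf0]
  · rw [show stE ((⟨k', hk'⟩, fun i => f' i.val) : QE Q) = f' k' from rfl, hE, hlast]
  · rw [hchain, runsVal_eq]
    refine hle.trans (le_of_eq ?_)
    unfold infRun
    refine iInf_congr fun m => ?_
    have h1 : extF ((⟨k', hk'⟩, fun i => f' i.val) : QE Q) m.val = f' m.val := by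
      have : m.val < Fintype.card Q := lt_trans m.isLt hk'
      simp [extF, this]
    have h2 : extF ((⟨k', hk'⟩, fun i => f' i.val) : QE Q) (m.val + 1) = f' (m.val + 1) := by
      have : m.val + 1 < Fintype.card Q := Nat.lt_of_le_of_lt m.isLt hk'
      simp [extF, this]
    rw [h1, h2]

/-- the ε-free automaton -/
def buildB (M : LVFAe Q A l) : LVFA (QE Q) A l where
  δ s a t := M.δ (stE s) (some a) (st0 t) ⊓ runsVal M t
  init s := M.init (st0 s) ⊓ runsVal M s
  final s := M.final (stE s)

omit [Fintype Q] in
lemma red_epsL (r : List Q) : ((epsL A r).map Prod.fst).reduceOption = [] := by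
  induction r with
  | nil => simp
  | cons q r ih => simpa [epsL] using ih

omit [Fintype Q] in
lemma red_eps_append (r : List Q) (X : List (Option A × Q)) :
    (((epsL A r ++ X).map Prod.fst)).reduceOption = (X.map Prod.fst).reduceOption := by
  rw [List.map_append, List.reduceOption_append, red_epsL, List.nil_append]

omit [Fintype Q] in
lemma red_blocks {γ : Type*} (g : γ → A) (gq : γ → Q) (gr : γ → List Q) (bs : List γ) :
    (((bs.flatMap fun c => (some (g c), gq c) :: epsL A (gr c)).map Prod.fst)).reduceOption =
      bs.map g := by
  induction bs with
  | nil => simp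
  | cons c bs ih =>
    rw [List.flatMap_cons, List.cons_append, List.map_cons]
    show (some (g c) :: List.map Prod.fst _).reduceOption = _
    rw [show ∀ (L : List (Option A)), (some (g c) :: L).reduceOption =
      g c :: L.reduceOption from fun _ => rfl]
    rw [List.map_cons]
    congr 1
    rw [red_eps_append]
    exact ih

lemma blkE_chain (M : LVFAe Q A l) (bs : List (A × QE Q)) (s : QE Q) :
    chain M.δ (stE s) (bs.flatMap fun p => (some p.1, st0 p.2) :: epsL A (runL p.2)) =
        chain (buildB M).δ s bs ∧
      lastSt (stE s) (bs.flatMap fun p => (some p.1, st0 p.2) :: epsL A (runL p.2)) =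
        stE (lastSt s bs) := by
  induction bs generalizing s with
  | nil => simp
  | cons p bs ih =>
    obtain ⟨a, t⟩ := p
    constructor
    · rw [List.flatMap_cons, List.cons_append, chain_cons, chain_append, lastSt_runL]
      dsimp only
      rw [(ih t).1, ← runsVal]
      show _ = (M.δ (stE s) (some a) (st0 t) ⊓ runsVal M t) ⊓ chain (buildB M).δ t bs
      rw [inf_assoc]
    · rw [List.flatMap_cons, List.cons_append, lastSt_cons, lastSt_append, lastSt_runL]
      dsimp only
      rw [(ih t).2]
      rfl

/-- split a step sequence into a leading ε-run and letter-blocks -/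
def splitE {Q : Type*} : List (Option A × Q) → List Q × List (A × Q × List Q)
  | [] => ([], [])
  | (none, q) :: rest => ((splitE rest).1.cons q, (splitE rest).2)
  | (some a, q) :: rest => ([], (a, q, (splitE rest).1) :: (splitE rest).2)

omit [Fintype Q] in
lemma splitE_recon (steps : List (Option A × Q)) :
    steps = epsL A (splitE steps).1 ++
      (splitE steps).2.flatMap fun c => (some c.1, c.2.1) :: epsL A c.2.2 := by
  induction steps with
  | nil => simp [splitE]
  | cons p rest ih =>
    obtain ⟨τ, q⟩ := p
    cases τ with
    | none =>
      show (none, q) :: rest = epsL A (q :: (splitE rest).1) ++ _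
      rw [epsL_cons, List.cons_append]
      exact congrArg _ ih
    | some a =>
      have hs : splitE ((some a, q) :: rest) =
          (([] : List Q), (a, q, (splitE rest).1) :: (splitE rest).2) := rfl
      rw [hs, epsL_nil, List.nil_append, List.flatMap_cons, List.cons_append]
      exact congrArg _ ih

lemma blockCut (M : LVFAe Q A l) (bs : List (A × Q × List Q)) (s : QE Q) :
    ∃ bs' : List (A × QE Q), bs'.map Prod.fst = bs.map (fun c => c.1) ∧
      chain M.δ (stE s) (bs.flatMap fun c => (some c.1, c.2.1) :: epsL A c.2.2) ≤
        chain (buildB M).δ s bs' ∧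
      lastSt (stE s) (bs.flatMap fun c => (some c.1, c.2.1) :: epsL A c.2.2) =
        stE (lastSt s bs') := by
  induction bs generalizing s with
  | nil => exact ⟨[], rfl, le_rfl, rfl⟩
  | cons c bs ih =>
    obtain ⟨a, q, r⟩ := c
    obtain ⟨t, ht0, htE, htle⟩ := cut M q r
    obtain ⟨bs', hmap, hle, hlast⟩ := ih t
    refine ⟨(a, t) :: bs', by simpa using hmap, ?_, ?_⟩
    · rw [List.flatMap_cons, List.cons_append, chain_cons, chain_append, chain_cons]
      show _ ≤ (M.δ (stE s) (some a) (st0 t) ⊓ runsVal M t) ⊓ chain (buildB M).δ t bs'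
      rw [ht0, inf_assoc]
      refine inf_le_inf_left _ (inf_le_inf htle ?_)
      rw [← htE]
      exact hle
    · rw [List.flatMap_cons, List.cons_append, lastSt_cons, lastSt_append, ← htE, hlast]
      rfl

theorem core (M : LVFAe Q A l) (w : List A) :
    lvfaeLang M w = lvfaLang (buildB M) w := by
  rw [lvfaeLang_eq_eLang, lvfaLang_eq_nLang]
  apply le_antisymm
  · -- ε-automaton ≤ built automaton
    refine iSup_le fun q0 => iSup_le fun steps => iSup_le fun h => ?_
    obtain ⟨s0, hs0, hsE, hle0⟩ := cut M q0 (splitE steps).1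
    obtain ⟨bs', hmap, hle, hlast⟩ := blockCut M (splitE steps).2 s0
    have hrec := splitE_recon (A := A) steps
    have hw : bs'.map Prod.fst = w := by
      rw [hmap, ← h]
      conv_rhs => rw [hrec]
      rw [red_eps_append, red_blocks (γ := A × Q × List Q) (fun c => c.1) (fun c => c.2.1)
        (fun c => c.2.2)]
    refine le_iSup_of_le s0 (le_iSup_of_le bs' (le_iSup_of_le hw ?_))
    conv_lhs => rw [hrec]
    rw [chain_append, lastSt_append, ← hsE, hlast]
    show M.init q0 ⊓ (chain M.δ q0 (epsL A (splitE steps).1) ⊓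
        chain M.δ (stE s0) _) ⊓ M.final (stE (lastSt s0 bs')) ≤
      (M.init (st0 s0) ⊓ runsVal M s0) ⊓ chain (buildB M).δ s0 bs' ⊓
        M.final (stE (lastSt s0 bs'))
    rw [hs0, ← inf_assoc]
    exact inf_le_inf (inf_le_inf (inf_le_inf le_rfl hle0) hle) le_rfl
  · -- built automaton ≤ ε-automaton
    refine iSup_le fun s0 => iSup_le fun bs' => iSup_le fun h => ?_
    set steps : List (Option A × Q) :=
      epsL A (runL s0) ++ bs'.flatMap fun p => (some p.1, st0 p.2) :: epsL A (runL p.2)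
      with hsteps
    have hred : (steps.map Prod.fst).reduceOption = w := by
      rw [hsteps, red_eps_append,
        red_blocks Prod.fst (fun p => st0 p.2) (fun p => runL p.2), h]
    refine le_iSup_of_le (st0 s0) (le_iSup_of_le steps (le_iSup_of_le hred (le_of_eq ?_)))
    rw [hsteps, chain_append, lastSt_append, lastSt_runL, (blkE_chain M bs' s0).1,
      (blkE_chain M bs' s0).2, ← runsVal]
    show (M.init (st0 s0) ⊓ runsVal M s0) ⊓ chain (buildB M).δ s0 bs' ⊓
        M.final (stE (lastSt s0 bs')) =
      M.init (st0 s0) ⊓ (runsVal M s0 ⊓ chain (buildB M).δ s0 bs') ⊓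
        M.final (stE (lastSt s0 bs'))
    ac_rfl

end Build

/-- relabel an ε-automaton along an equivalence of state spaces -/
def relabel {Q P : Type*} (e : Q ≃ P) (M : LVFAe Q A l) : LVFAe P A l where
  δ p τ p' := M.δ (e.symm p) τ (e.symm p')
  init p := M.init (e.symm p)
  final p := M.final (e.symm p)

lemma lvfaeLang_relabel {Q P : Type*} (e : Q ≃ P) (M : LVFAe Q A l) (w : List A) :
    lvfaeLang (relabel e M) w = lvfaeLang M w := by
  unfold lvfaeLang
  refine iSup_congr fun n => iSup_congr fun τ => iSup_congr fun h => ?_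
  apply le_antisymm
  · refine iSup_le fun path => le_iSup_of_le (fun i => e.symm (path i)) ?_
    exact le_of_eq rfl
  · refine iSup_le fun path => le_iSup_of_le (fun i => e (path i)) ?_
    apply le_of_eq
    simp [relabel]

end EpsElim

/-- Every `l`-VFA with ε-moves is equivalent to an `l`-VFA without ε-moves. -/
theorem lvfae_to_lvfa {l Q A : Type*} [OrthomodularCompleteLattice l]
    [Fintype Q] [Fintype A] (M : LVFAe Q A l) :
    ∃ (Q' : Type) (_ : Fintype Q') (B : LVFA Q' A l),
      ∀ w : List A, lvfaeLang M w = lvfaLang B w := by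
  classical
  let e := Fintype.equivFin Q
  let M' := EpsElim.relabel e M
  exact ⟨EpsElim.QE (Fin (Fintype.card Q)), inferInstance, EpsElim.buildB M',
    fun w => by rw [← EpsElim.lvfaeLang_relabel e M w, EpsElim.core]⟩
end

section
/- For every l-valued finite automaton with ε-moves A, there exists an l-valued deterministic finite automaton B such that rec_A = rec_B. -/
namespace LVFAeAux

variable {l Q A : Type*} [OrthomodularCompleteLattice l]

def pathVal (M : LVFAe Q A l) : Q → List (Option A × Q) → l
  | _, [] => ⊤
  | q, s :: rest => M.δ q s.1 s.2 ⊓ pathVal M s.2 rest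

def endSt : Q → List (Option A × Q) → Q
  | q, [] => q
  | _, (s :: rest : List (Option A × Q)) => endSt s.2 rest

def word (p : List (Option A × Q)) : List A := (p.map Prod.fst).reduceOption

@[simp] lemma word_nil : word ([] : List (Option A × Q)) = [] := rfl

lemma word_cons (s : Option A × Q) (p : List (Option A × Q)) :
    word (s :: p) = s.1.toList ++ word p := by
  cases h : s.1 <;> simp [word, h]

@[simp] lemma word_append (p p' : List (Option A × Q)) :
    word (p ++ p') = word p ++ word p' := by
  simp [word, List.reduceOption_append]

lemma pathVal_append (M : LVFAe Q A l) (p p' : List (Option A × Q)) : ∀ q,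
    pathVal M q (p ++ p') = pathVal M q p ⊓ pathVal M (endSt q p) p' := by
  induction p with
  | nil => intro q; simp [pathVal, endSt]
  | cons s rest ih => intro q; simp [pathVal, endSt, ih s.2, inf_assoc]

lemma endSt_append (p p' : List (Option A × Q)) : ∀ q : Q,
    endSt q (p ++ p') = endSt (endSt q p) p' := by
  induction p with
  | nil => intro q; simp [endSt]
  | cons s rest ih => intro q; simp [endSt, ih s.2]

lemma iInf_fin_succ {n : ℕ} (f : Fin (n + 1) → l) :
    ⨅ i, f i = f 0 ⊓ ⨅ i : Fin n, f i.succ := by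
  apply le_antisymm
  · exact le_inf (iInf_le _ 0) (le_iInf fun i => iInf_le _ _)
  · refine le_iInf fun j => ?_
    induction j using Fin.cases with
    | zero => exact inf_le_left
    | succ i => exact inf_le_right.trans (iInf_le _ i)

lemma pathVal_ofFn (M : LVFAe Q A l) : ∀ (n : ℕ) (τ : Fin n → Option A)
    (path : Fin (n + 1) → Q),
    pathVal M (path 0) (List.ofFn fun i => (τ i, path i.succ)) =
      ⨅ i : Fin n, M.δ (path i.castSucc) (τ i) (path i.succ) := by
  intro n
  induction n with
  | zero => intro τ path; simp [pathVal]; exact (iInf_of_empty _).symm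
  | succ n ih =>
    intro τ path
    rw [List.ofFn_succ]
    rw [iInf_fin_succ (fun i => M.δ (path i.castSucc) (τ i) (path i.succ))]
    have := ih (fun i => τ i.succ) (fun j => path j.succ)
    simp only [pathVal]
    rw [this]
    simp

lemma endSt_ofFn : ∀ (n : ℕ) (τ : Fin n → Option A) (path : Fin (n + 1) → Q),
    endSt (path 0) (List.ofFn fun i => (τ i, path i.succ)) = path (Fin.last n) := by
  intro n
  induction n with
  | zero => intro τ path; simp [endSt]
  | succ n ih =>
    intro τ path
    rw [List.ofFn_succ]
    simp only [endSt]
    have := ih (fun i => τ i.succ) (fun j => path j.succ)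
    rw [this]
    simp [Fin.succ_last]

lemma word_ofFn (n : ℕ) (τ : Fin n → Option A) (path : Fin (n + 1) → Q) :
    word (List.ofFn fun i => (τ i, path i.succ)) = (List.ofFn τ).reduceOption := by
  simp only [word, List.map_ofFn]
  congr 1

lemma exists_repr (q0 : Q) (p : List (Option A × Q)) :
    ∃ (τ : Fin p.length → Option A) (path : Fin (p.length + 1) → Q),
      path 0 = q0 ∧ (List.ofFn fun i => (τ i, path i.succ)) = p := by
  refine ⟨fun i => (p.get i).1,
    fun j => (q0 :: p.map Prod.snd).getD j.val q0, by simp, ?_⟩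
  apply List.ext_get (by simp)
  intro i h1 h2
  simp only [List.get_ofFn]
  simp [List.getD_cons_succ, List.getD_eq_getElem _ _ (show i < (p.map Prod.snd).length by simpa using h2)]
  simp [List.getElem?_eq_getElem h2]

def recL (M : LVFAe Q A l) (w : List A) : l :=
  ⨆ q0 : Q, ⨆ p : List (Option A × Q), ⨆ _ : word p = w,
    M.init q0 ⊓ pathVal M q0 p ⊓ M.final (endSt q0 p)

lemma lvfaeLang_eq_recL (M : LVFAe Q A l) (w : List A) :
    lvfaeLang M w = recL M w := by
  apply le_antisymm
  · refine iSup_le fun n => iSup_le fun τ => iSup_le fun hw => iSup_le fun path => ?_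
    set P := List.ofFn fun i => (τ i, path i.succ) with hP
    have h1 := pathVal_ofFn M n τ path
    have h2 := endSt_ofFn n τ path
    have h3 := word_ofFn (Q := Q) n τ path
    rw [← h1, ← h2]
    refine le_trans ?_ (le_iSup _ (path 0))
    refine le_trans ?_ (le_iSup _ P)
    exact le_iSup (fun _ : word P = w =>
      M.init (path 0) ⊓ pathVal M (path 0) P ⊓ M.final (endSt (path 0) P))
      (by rw [h3, hw])
  · refine iSup_le fun q0 => iSup_le fun p => iSup_le fun hw => ?_
    obtain ⟨τ, path, hpath0, hofn⟩ := exists_repr q0 p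
    have h1 := pathVal_ofFn M p.length τ path
    have h2 := endSt_ofFn (Q := Q) p.length τ path
    have h3 := word_ofFn (Q := Q) p.length τ path
    rw [hofn] at h1 h2 h3
    rw [hpath0] at h1 h2
    rw [h1, h2, ← hpath0]
    refine le_trans ?_ (le_iSup _ p.length)
    refine le_trans ?_ (le_iSup _ τ)
    exact le_trans
      (le_iSup (fun path : Fin (p.length + 1) → Q =>
        M.init (path 0) ⊓ (⨅ i, M.δ (path i.castSucc) (τ i) (path i.succ)) ⊓
        M.final (path (Fin.last p.length))) path)
      (le_iSup (fun _ : (List.ofFn τ).reduceOption = w => ⨆ path : Fin (p.length + 1) → Q,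
        M.init (path 0) ⊓ (⨅ i, M.δ (path i.castSucc) (τ i) (path i.succ)) ⊓
        M.final (path (Fin.last p.length))) (by rw [← h3, hw]))

def Wmem (M : LVFAe Q A l) (w : List A) (q : Q) (x : l) : Prop :=
  ∃ q0 p, word p = w ∧ endSt q0 p = q ∧ x = M.init q0 ⊓ pathVal M q0 p

lemma recL_eq_W (M : LVFAe Q A l) (w : List A) :
    recL M w = ⨆ q : Q, ⨆ x : l, ⨆ _ : Wmem M w q x, x ⊓ M.final q := by
  apply le_antisymm
  · refine iSup_le fun q0 => iSup_le fun p => iSup_le fun hw => ?_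
    refine le_trans ?_ (le_iSup _ (endSt q0 p))
    refine le_trans ?_ (le_iSup _ (M.init q0 ⊓ pathVal M q0 p))
    exact le_iSup (fun _ : Wmem M w (endSt q0 p) (M.init q0 ⊓ pathVal M q0 p) =>
      (M.init q0 ⊓ pathVal M q0 p) ⊓ M.final (endSt q0 p)) ⟨q0, p, hw, rfl, rfl⟩
  · refine iSup_le fun q => iSup_le fun x => iSup_le fun hx => ?_
    obtain ⟨q0, p, hw, hq, hxv⟩ := hx
    subst hq; subst hxv
    refine le_trans ?_ (le_iSup _ q0)
    refine le_trans ?_ (le_iSup _ p)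
    exact le_iSup (fun _ : word p = w =>
      M.init q0 ⊓ pathVal M q0 p ⊓ M.final (endSt q0 p)) hw

lemma word_split {σ : A} : ∀ (p : List (Option A × Q)) (w : List A),
    word p = w ++ [σ] →
    ∃ p1 p2, p = p1 ++ p2 ∧ word p1 = w ∧ word p2 = [σ] := by
  intro p
  induction p with
  | nil => intro w h; simp at h
  | cons s rest ih =>
    intro w h
    rw [word_cons] at h
    cases hs : s.1 with
    | none =>
      rw [hs] at h; simp at h
      obtain ⟨p1, p2, h1, h2, h3⟩ := ih w h
      exact ⟨s :: p1, p2, by simp [h1], by rw [word_cons, hs, h2]; simp, h3⟩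
    | some a =>
      rw [hs] at h; simp at h
      cases w with
      | nil =>
        simp at h
        exact ⟨[], s :: rest, rfl, rfl, by rw [word_cons, hs]; simp [h.1, h.2]⟩
      | cons b w' =>
        simp at h
        obtain ⟨p1, p2, h1, h2, h3⟩ := ih w' h.2
        exact ⟨s :: p1, p2, by simp [h1], by rw [word_cons, hs, h2]; simp [h.1], h3⟩

section Finite
variable [Fintype Q] [Fintype A] [DecidableEq l]

def Dδ (M : LVFAe Q A l) : Finset l :=
  Finset.univ.image fun t : Q × Option A × Q => M.δ t.1 t.2.1 t.2.2

def Dall (M : LVFAe Q A l) : Finset l := Dδ M ∪ Finset.univ.image M.init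

def EFin (M : LVFAe Q A l) : Finset l :=
  (Dall M).powerset.image fun T => T.inf id

lemma pathVal_finset (M : LVFAe Q A l) : ∀ (p : List (Option A × Q)) (q : Q),
    ∃ T : Finset l, T ⊆ Dδ M ∧ pathVal M q p = T.inf id := by
  intro p
  induction p with
  | nil => intro q; exact ⟨∅, by simp, by simp [pathVal]⟩
  | cons s rest ih =>
    intro q
    obtain ⟨T, hT, hv⟩ := ih s.2
    refine ⟨insert (M.δ q s.1 s.2) T, ?_, ?_⟩
    · refine Finset.insert_subset ?_ hT
      exact Finset.mem_image.2 ⟨(q, s.1, s.2), Finset.mem_univ _, rfl⟩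
    · simp [pathVal, hv, Finset.inf_insert]

lemma W_mem_EFin (M : LVFAe Q A l) (q0 : Q) (p : List (Option A × Q)) :
    M.init q0 ⊓ pathVal M q0 p ∈ EFin M := by
  obtain ⟨T, hT, hv⟩ := pathVal_finset M p q0
  refine Finset.mem_image.2 ⟨insert (M.init q0) T, ?_, ?_⟩
  · refine Finset.mem_powerset.2
      (Finset.insert_subset ?_ (hT.trans Finset.subset_union_left))
    exact Finset.mem_union_right _ (Finset.mem_image.2 ⟨q0, Finset.mem_univ _, rfl⟩)
  · simp [Finset.inf_insert, hv]

def detNext (M : LVFAe Q A l) (f : Q → Set {x : l // x ∈ EFin M}) (σ : A) :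
    Q → Set {x : l // x ∈ EFin M} := fun q' =>
  { e | ∃ q : Q, ∃ a ∈ f q, ∃ p, word p = [σ] ∧ endSt q p = q' ∧
      (e : l) = (a : l) ⊓ pathVal M q p }

def detStart (M : LVFAe Q A l) : Q → Set {x : l // x ∈ EFin M} := fun q =>
  { e | ∃ q0 p, word p = ([] : List A) ∧ endSt q0 p = q ∧
      (e : l) = M.init q0 ⊓ pathVal M q0 p }

def detFinal (M : LVFAe Q A l) (f : Q → Set {x : l // x ∈ EFin M}) : l :=
  ⨆ q : Q, ⨆ e : {x : l // x ∈ EFin M}, ⨆ _ : e ∈ f q, (e : l) ⊓ M.final q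

def detB (M : LVFAe Q A l) : LVDFA (Q → Set {x : l // x ∈ EFin M}) A l :=
  ⟨detNext M, detStart M, detFinal M⟩

lemma det_invariant (M : LVFAe Q A l) : ∀ (w : List A) (q : Q) (x : l),
    (∃ e ∈ (w.foldl (detB M).next (detB M).start) q, (e : l) = x) ↔ Wmem M w q x := by
  intro w
  induction w using List.reverseRecOn with
  | nil =>
    intro q x
    constructor
    · rintro ⟨e, he, rfl⟩
      obtain ⟨q0, p, h1, h2, h3⟩ := he
      exact ⟨q0, p, h1, h2, h3⟩
    · rintro ⟨q0, p, h1, h2, rfl⟩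
      exact ⟨⟨_, W_mem_EFin M q0 p⟩, ⟨q0, p, h1, h2, rfl⟩, rfl⟩
  | append_singleton w σ ih =>
    intro q' x
    rw [List.foldl_append]
    simp only [List.foldl_cons, List.foldl_nil]
    constructor
    · rintro ⟨e, he, rfl⟩
      obtain ⟨q, a, ha, p, hword, hend, hval⟩ := he
      obtain ⟨q0, p1, hw1, hend1, hval1⟩ := (ih q (a : l)).1 ⟨a, ha, rfl⟩
      refine ⟨q0, p1 ++ p, ?_, ?_, ?_⟩
      · rw [word_append, hw1, hword]
      · rw [endSt_append, hend1, hend]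
      · rw [hval, hval1, pathVal_append, hend1, inf_assoc]
    · rintro ⟨q0, p, hword, hend, rfl⟩
      obtain ⟨p1, p2, rfl, hw1, hw2⟩ := word_split p w hword
      have ha : Wmem M w (endSt q0 p1) (M.init q0 ⊓ pathVal M q0 p1) :=
        ⟨q0, p1, hw1, rfl, rfl⟩
      obtain ⟨ea, hea, heaval⟩ := (ih (endSt q0 p1) _).2 ha
      refine ⟨⟨_, W_mem_EFin M q0 (p1 ++ p2)⟩, ?_, rfl⟩
      refine ⟨endSt q0 p1, ea, hea, p2, hw2, ?_, ?_⟩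
      · rw [← endSt_append]; exact hend
      · show M.init q0 ⊓ pathVal M q0 (p1 ++ p2) = _
        rw [heaval, pathVal_append, inf_assoc]

lemma det_lang (M : LVFAe Q A l) (w : List A) :
    lvfaeLang M w = lvdfaLang (detB M) w := by
  rw [lvfaeLang_eq_recL, recL_eq_W]
  show _ = detFinal M (w.foldl (detB M).next (detB M).start)
  apply le_antisymm
  · refine iSup_le fun q => iSup_le fun x => iSup_le fun hx => ?_
    obtain ⟨e, he, hev⟩ := (det_invariant M w q x).2 hx
    rw [← hev]
    refine le_trans ?_ (le_iSup _ q)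
    refine le_trans ?_ (le_iSup _ e)
    exact le_iSup (fun _ : e ∈ (w.foldl (detB M).next (detB M).start) q =>
      (e : l) ⊓ M.final q) he
  · refine iSup_le fun q => iSup_le fun e => iSup_le fun he => ?_
    have hx : Wmem M w q (e : l) := (det_invariant M w q (e : l)).1 ⟨e, he, rfl⟩
    refine le_trans ?_ (le_iSup _ q)
    refine le_trans ?_ (le_iSup _ (e : l))
    exact le_iSup (fun _ : Wmem M w q (e : l) => (e : l) ⊓ M.final q) hx

end Finite

lemma lvdfa_transport {Q1 Q2 A l : Type*} (B : LVDFA Q1 A l) (e : Q1 ≃ Q2) :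
    ∃ B' : LVDFA Q2 A l, ∀ w, lvdfaLang B' w = lvdfaLang B w := by
  refine ⟨⟨fun s a => e (B.next (e.symm s) a), e B.start,
    fun s => B.final (e.symm s)⟩, fun w => ?_⟩
  have key : ∀ (w : List A) (s : Q1),
      w.foldl (fun s a => e (B.next (e.symm s) a)) (e s) = e (w.foldl B.next s) := by
    intro w
    induction w with
    | nil => intro s; rfl
    | cons a w ih =>
      intro s
      simp only [List.foldl_cons, Equiv.symm_apply_apply]
      exact ih (B.next s a)
  simp [lvdfaLang, key w B.start]

end LVFAeAux

/-- Every `l`-VFA with ε-moves is equivalent to an `l`-VDFA. -/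
theorem lvfae_to_lvdfa {l Q A : Type*} [OrthomodularCompleteLattice l]
    [Fintype Q] [Fintype A] (M : LVFAe Q A l) :
    ∃ (Q' : Type) (_ : Fintype Q') (B : LVDFA Q' A l),
      ∀ w : List A, lvfaeLang M w = lvdfaLang B w := by
  classical
  let Qb := Q → Set {x : l // x ∈ LVFAeAux.EFin M}
  haveI : Fintype Qb := by unfold Qb; infer_instance
  obtain ⟨B', hB'⟩ := LVFAeAux.lvdfa_transport (LVFAeAux.detB M) (Fintype.equivFin Qb)
  exact ⟨Fin (Fintype.card Qb), inferInstance, B', fun w => by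
    rw [hB' w, ← LVFAeAux.det_lang]⟩
end

section
/- Pumping lemma in quantum logic: for every l-regular language A : Σ* → l there exists a positive integer n such that for every string z ∈ Σ* with |z| ≥ n there exist u, v, w ∈ Σ* with z = uvw, |uv| ≤ n, v ≠ ε, and for every non-negative integer k, A(u v^k w) = A(u v w). -/
section Pump

variable {Q A l : Type*} [OrthomodularCompleteLattice l] [DecidableEq Q] [DecidableEq A]

/-- The value of a set of transitions. -/
def tval (M : LVFA Q A l) (S : Finset (Q × A × Q)) : l :=
  S.inf (fun t => M.δ t.1 t.2.1 t.2.2)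

/-- The set of transition-sets of paths from `p` to `q` labelled by `x`. -/
def phi [Fintype Q] : List A → Q → Q → Finset (Finset (Q × A × Q))
  | [], p, q => if p = q then {∅} else ∅
  | a :: x, p, r => Finset.univ.biUnion (fun q => (phi x q r).image (insert (p, a, q)))

variable [Fintype Q]

lemma mem_phi_nil {p q : Q} {S : Finset (Q × A × Q)} :
    S ∈ phi [] p q ↔ p = q ∧ S = ∅ := by
  simp [phi]
  split <;> simp_all

lemma mem_phi_cons {a : A} {x : List A} {p r : Q} {S : Finset (Q × A × Q)} :
    S ∈ phi (a :: x) p r ↔ ∃ q S', S' ∈ phi x q r ∧ S = insert (p, a, q) S' := by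
  simp [phi, eq_comm]

lemma mem_phi_append {x y : List A} {p r : Q} {S : Finset (Q × A × Q)} :
    S ∈ phi (x ++ y) p r ↔
      ∃ q S₁ S₂, S₁ ∈ phi x p q ∧ S₂ ∈ phi y q r ∧ S = S₁ ∪ S₂ := by
  induction x generalizing p S with
  | nil =>
    simp only [List.nil_append, mem_phi_nil]
    constructor
    · intro h; exact ⟨p, ∅, S, ⟨rfl, rfl⟩, h, (Finset.empty_union S).symm⟩
    · rintro ⟨q, S₁, S₂, ⟨rfl, rfl⟩, h, rfl⟩; simpa using h
  | cons a x ih =>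
    simp only [List.cons_append, mem_phi_cons, ih]
    constructor
    · rintro ⟨q', S', ⟨q, S₁, S₂, h1, h2, rfl⟩, rfl⟩
      exact ⟨q, insert ((p, a, q') : Q × A × Q) S₁, S₂, ⟨q', S₁, h1, rfl⟩, h2,
        (Finset.insert_union _ _ _).symm⟩
    · rintro ⟨q, T, S₂, ⟨q', S₁, h1, rfl⟩, h2, rfl⟩
      exact ⟨q', S₁ ∪ S₂, ⟨q, S₁, S₂, h1, h2, rfl⟩, Finset.insert_union _ _ _⟩

lemma phi_append_congr {x x' : List A} (h : (phi x : Q → Q → _) = phi x') (y : List A) :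
    (phi (x ++ y) : Q → Q → _) = phi (x' ++ y) := by
  funext p r
  ext S
  rw [mem_phi_append, mem_phi_append, h]

end Pump

section Pump2
variable {Q A l : Type*} [OrthomodularCompleteLattice l] [DecidableEq Q] [DecidableEq A]
  [Fintype Q]

lemma fin_iInf_succ {n : ℕ} {l : Type*} [CompleteLattice l] (f : Fin (n + 1) → l) :
    ⨅ i, f i = f 0 ⊓ ⨅ i : Fin n, f i.succ := by
  refine le_antisymm (le_inf (iInf_le f 0) (le_iInf fun i => iInf_le f i.succ)) (le_iInf fun i => ?_)
  induction i using Fin.cases with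
  | zero => exact inf_le_left
  | succ j => exact inf_le_right.trans (iInf_le _ j)

/-- Path-sum value with general initial and final weights. -/
def pval (M : LVFA Q A l) (i f : Q → l) (x : List A) : l :=
  ⨆ path : Fin (x.length + 1) → Q,
    i (path 0) ⊓
      (⨅ j : Fin x.length, M.δ (path j.castSucc) (x.get j) (path j.succ)) ⊓
      f (path (Fin.last x.length))

lemma lvfaLang_eq_pval (M : LVFA Q A l) (x : List A) :
    lvfaLang M x = pval M M.init M.final x := rfl

lemma pval_nil (M : LVFA Q A l) (i f : Q → l) : pval M i f [] = ⨆ q : Q, i q ⊓ f q := by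
  refine le_antisymm (iSup_le fun path => ?_) (iSup_le fun q => ?_)
  · refine le_iSup_of_le (path 0) ?_
    simp [Fin.last]
  · refine le_iSup_of_le (fun _ => q) ?_
    simp

lemma pval_cons (M : LVFA Q A l) (i f : Q → l) (a : A) (x : List A) :
    pval M i f (a :: x) = ⨆ p : Q, pval M (fun q => i p ⊓ M.δ p a q) f x := by
  unfold pval
  show (⨆ path : Fin (x.length + 1 + 1) → Q,
      i (path 0) ⊓ (⨅ j : Fin (x.length + 1),
        M.δ (path j.castSucc) ((a :: x).get j) (path j.succ)) ⊓
      f (path (Fin.last (x.length + 1)))) = _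
  rw [← Equiv.iSup_comp (Fin.consEquiv (fun _ : Fin (x.length + 1 + 1) => Q)), iSup_prod]
  refine iSup_congr fun p => iSup_congr fun c => ?_
  simp only [Fin.consEquiv_apply]
  rw [show Fin.last (x.length + 1) = (Fin.last x.length).succ from rfl, fin_iInf_succ]
  simp only [Fin.cons_zero, Fin.cons_succ, Fin.castSucc_zero, ← Fin.succ_castSucc]
  have hg : ∀ j : Fin x.length, (a :: x).get j.succ = x.get j := fun j => rfl
  have hg0 : (a :: x).get (0 : Fin (x.length + 1)) = a := rfl
  simp only [hg, hg0, inf_assoc]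

lemma pval_eq_phi (M : LVFA Q A l) (f : Q → l) (x : List A) (i : Q → l) :
    pval M i f x = ⨆ p : Q, ⨆ q : Q, (phi x p q).sup (fun S => i p ⊓ tval M S ⊓ f q) := by
  induction x generalizing i with
  | nil =>
    rw [pval_nil]
    refine le_antisymm (iSup_le fun q => ?_) (iSup_le fun p => iSup_le fun q => ?_)
    · refine le_iSup_of_le q (le_iSup_of_le q ?_)
      refine le_trans ?_ (Finset.le_sup (f := fun S => i q ⊓ tval M S ⊓ f q)
        (mem_phi_nil.mpr ⟨rfl, rfl⟩))
      simp [tval]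
    · refine Finset.sup_le fun S hS => ?_
      obtain ⟨rfl, rfl⟩ := mem_phi_nil.mp hS
      exact le_iSup_of_le p (by simp [tval])
  | cons a x ih =>
    rw [pval_cons]
    simp only [ih]
    simp only [phi, Finset.sup_biUnion, Finset.sup_image, Finset.sup_univ_eq_iSup,
      Function.comp]
    refine iSup_congr fun p => ?_
    rw [iSup_comm]
    refine iSup_congr fun q' => iSup_congr fun q => Finset.sup_congr rfl fun S _ => ?_
    simp only [Function.comp_apply, tval, Finset.inf_insert, inf_assoc]



lemma lvfaLang_phi_congr (M : LVFA Q A l) {x y : List A}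
    (h : (phi x : Q → Q → _) = phi y) : lvfaLang M x = lvfaLang M y := by
  rw [lvfaLang_eq_pval, lvfaLang_eq_pval, pval_eq_phi, pval_eq_phi, h]

lemma phi_flatten_replicate {u v : List A}
    (h : (phi u : Q → Q → _) = phi (u ++ v)) :
    ∀ k, (phi (u ++ (List.replicate k v).flatten) : Q → Q → _) = phi u
  | 0 => by simp
  | k + 1 => by
    have e : u ++ (List.replicate (k + 1) v).flatten
        = (u ++ v) ++ (List.replicate k v).flatten := by
      simp [List.replicate_succ]
    rw [e, phi_append_congr h.symm, phi_flatten_replicate h k]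


end Pump2

/-- Pumping lemma in quantum logic. -/
theorem lregular_pumping {l A : Type*} [OrthomodularCompleteLattice l] [Fintype A]
    (f : List A → l) (hf : IsLRegular f) :
    ∃ n : ℕ, 0 < n ∧ ∀ z : List A, n ≤ z.length →
      ∃ u v w : List A, z = u ++ v ++ w ∧ (u ++ v).length ≤ n ∧ v ≠ [] ∧
        ∀ k : ℕ, f (u ++ (List.replicate k v).flatten ++ w) = f (u ++ v ++ w) := by
  classical
  obtain ⟨Q, hQ, M, hM⟩ := hf
  letI := hQ
  set n := Fintype.card (Q → Q → Finset (Finset (Q × A × Q))) with hn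
  refine ⟨n, Fintype.card_pos, fun z hz => ?_⟩
  obtain ⟨i, j, hij, heq⟩ : ∃ i j : Fin (n + 1), (i : ℕ) < j ∧
      (phi (z.take i) : Q → Q → _) = phi (z.take j) := by
    obtain ⟨i, j, hne, heq⟩ := Fintype.exists_ne_map_eq_of_card_lt
      (fun i : Fin (n + 1) => (phi (z.take i) : Q → Q → Finset (Finset (Q × A × Q))))
      (by simp [hn])
    rcases hne.lt_or_gt with h | h
    · exact ⟨i, j, h, heq⟩
    · exact ⟨j, i, h, heq.symm⟩
  have hjn : (j : ℕ) ≤ n := Nat.lt_succ_iff.mp j.isLt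
  refine ⟨z.take i, (z.take j).drop i, z.drop j, ?_, ?_, ?_, ?_⟩
  · have h1 : (z.take (i : ℕ)) = (z.take (j : ℕ)).take i := by
      rw [List.take_take, min_eq_left hij.le]
    rw [h1, List.take_append_drop, List.take_append_drop]
  · have h1 : (z.take (i : ℕ)) = (z.take (j : ℕ)).take i := by
      rw [List.take_take, min_eq_left hij.le]
    rw [h1, List.take_append_drop, List.length_take]
    exact le_trans (min_le_left _ _) hjn
  · intro hv
    have := congrArg List.length hv
    simp [List.length_take, min_eq_left (le_trans hjn hz)] at this
    omega
  · intro k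
    have huv : z.take (i : ℕ) ++ (z.take (j : ℕ)).drop i = z.take j := by
      have h1 : (z.take (i : ℕ)) = (z.take (j : ℕ)).take i := by
        rw [List.take_take, min_eq_left hij.le]
      rw [h1, List.take_append_drop]
    have hphi : (phi (z.take (i : ℕ)) : Q → Q → _)
        = phi (z.take (i : ℕ) ++ (z.take (j : ℕ)).drop i) := by rw [huv]; exact heq
    rw [← hM, ← hM]
    apply lvfaLang_phi_congr
    calc (phi (z.take (i:ℕ) ++ (List.replicate k ((z.take (j:ℕ)).drop i)).flatten
            ++ z.drop (j:ℕ)) : Q → Q → _)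
        = phi (z.take (i:ℕ) ++ z.drop (j:ℕ)) :=
          phi_append_congr (phi_flatten_replicate hphi k) _
      _ = phi (z.take (i:ℕ) ++ (z.take (j:ℕ)).drop i ++ z.drop (j:ℕ)) :=
          (phi_append_congr hphi.symm _).symm
end

section
/- An l-valued language A : Σ* → l is l-regular if and only if there exist m ≥ 0, elements k₁,…,kₘ ∈ l∖{0}, and (classical) regular languages L₁,…,Lₘ ⊆ Σ* such that A = ⋁_{i=1}^m kᵢ·1_{Lᵢ}, where (k·1_L)(ω) = k if ω ∈ L and 0 otherwise. -/
section OMLHelpers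

variable {Q A l : Type*} [OrthomodularCompleteLattice l]

lemma OML.iInf_fin_succ {l : Type*} [CompleteLattice l] {n : ℕ} (g : Fin (n + 1) → l) :
    ⨅ i, g i = g 0 ⊓ ⨅ i : Fin n, g i.succ := by
  apply le_antisymm
  · exact le_inf (iInf_le _ 0) (le_iInf fun i => iInf_le _ i.succ)
  · refine le_iInf fun i => ?_
    cases i using Fin.cases with
    | zero => exact inf_le_left
    | succ j => exact inf_le_right.trans (iInf_le _ j)

/-- One step of the value-tracking subset construction. -/
def OML.lstep (M : LVFA Q A l) (s : Set (Q × l)) (a : A) : Set (Q × l) :=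
  {r | ∃ r0 ∈ s, r.2 = r0.2 ⊓ M.δ r0.1 a r.1}

/-- The set of (state, accumulated value) pairs reachable on input `w`. -/
def OML.reachSet (M : LVFA Q A l) (w : List A) : Set (Q × l) :=
  w.foldl (OML.lstep M) {r | r.2 = M.init r.1}

lemma OML.bridge (M : LVFA Q A l) (w : List A) :
    ∀ (s : Set (Q × l)) (r : Q × l),
      r ∈ w.foldl (OML.lstep M) s ↔ ∃ r0 ∈ s, ∃ p : Fin (w.length + 1) → Q,
        p 0 = r0.1 ∧ r.1 = p (Fin.last w.length) ∧
        r.2 = r0.2 ⊓ ⨅ i : Fin w.length, M.δ (p i.castSucc) (w.get i) (p i.succ) := by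
  induction w with
  | nil =>
    intro s r
    simp only [List.foldl_nil, List.length_nil]
    constructor
    · intro hr
      exact ⟨r, hr, fun _ => r.1, rfl, rfl, by simp⟩
    · rintro ⟨r0, hr0, p, h0, h1, h2⟩
      have : r = r0 := by
        refine Prod.ext ?_ ?_
        · rw [h1, show (Fin.last 0) = 0 from rfl, h0]
        · simpa using h2
      rwa [this]
  | cons a w ih =>
    intro s r
    rw [List.foldl_cons, ih]
    simp only [List.length_cons]
    constructor
    · rintro ⟨r1, ⟨r0, hr0, hstep⟩, p, h0, h1, h2⟩
      refine ⟨r0, hr0, (Fin.cons r0.1 p : Fin (w.length + 1 + 1) → Q), Fin.cons_zero _ _, ?_, ?_⟩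
      · rw [h1, show Fin.last (w.length + 1) = (Fin.last w.length).succ from (Fin.succ_last _).symm,
          Fin.cons_succ]
      · rw [OML.iInf_fin_succ]
        have e0 : M.δ ((Fin.cons r0.1 p : Fin (w.length + 1 + 1) → Q) (Fin.castSucc 0)) ((a :: w).get (0 : Fin (w.length + 1)))
            ((Fin.cons r0.1 p : Fin (w.length + 1 + 1) → Q) (Fin.succ 0)) = M.δ r0.1 a r1.1 := by
          rw [Fin.castSucc_zero, Fin.cons_zero, Fin.cons_succ, h0]
          rfl
        have e1 : ∀ i : Fin w.length,
            M.δ ((Fin.cons r0.1 p : Fin (w.length + 1 + 1) → Q) (Fin.castSucc i.succ)) ((a :: w).get i.succ)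
              ((Fin.cons r0.1 p : Fin (w.length + 1 + 1) → Q) (Fin.succ i.succ)) =
            M.δ (p i.castSucc) (w.get i) (p i.succ) := by
          intro i
          rw [← Fin.succ_castSucc, Fin.cons_succ, Fin.cons_succ]
          rfl
        rw [e0]
        simp only [e1]
        rw [← inf_assoc, ← hstep, h2]
    · rintro ⟨r0, hr0, p, h0, h1, h2⟩
      refine ⟨(p (Fin.succ 0), r0.2 ⊓ M.δ r0.1 a (p (Fin.succ 0))),
        ⟨r0, hr0, rfl⟩, fun i => p i.succ, rfl, ?_, ?_⟩
      · rw [h1, show Fin.last (w.length + 1) = (Fin.last w.length).succ from (Fin.succ_last _).symm]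
      · rw [h2, OML.iInf_fin_succ]
        have e0 : M.δ (p (Fin.castSucc 0)) ((a :: w).get (0 : Fin (w.length + 1))) (p (Fin.succ 0))
            = M.δ r0.1 a (p (Fin.succ 0)) := by
          rw [Fin.castSucc_zero, h0]
          rfl
        have e1 : ∀ i : Fin w.length,
            M.δ (p (Fin.castSucc i.succ)) ((a :: w).get i.succ) (p (Fin.succ i.succ)) =
            M.δ (p (Fin.succ i.castSucc)) (w.get i) (p i.succ.succ) := by
          intro i
          rw [← Fin.succ_castSucc]
          rfl
        rw [e0]
        simp only [e1]
        rw [← inf_assoc]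

/-- `lvfaLang` via the reachable-set semantics. -/
lemma OML.lang_eq_reach (M : LVFA Q A l) (w : List A) :
    lvfaLang M w = ⨆ r ∈ OML.reachSet M w, r.2 ⊓ M.final r.1 := by
  apply le_antisymm
  · refine iSup_le fun p => ?_
    have hmem : (p (Fin.last w.length),
        M.init (p 0) ⊓ ⨅ i : Fin w.length, M.δ (p i.castSucc) (w.get i) (p i.succ))
        ∈ OML.reachSet M w := by
      rw [OML.reachSet, OML.bridge]
      exact ⟨(p 0, M.init (p 0)), rfl, p, rfl, rfl, rfl⟩
    exact le_iSup₂_of_le _ hmem le_rfl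
  · refine iSup₂_le fun r hr => ?_
    rw [OML.reachSet, OML.bridge] at hr
    obtain ⟨r0, hr0, p, h0, h1, h2⟩ := hr
    have : r.2 ⊓ M.final r.1 = M.init (p 0) ⊓
        (⨅ i : Fin w.length, M.δ (p i.castSucc) (w.get i) (p i.succ)) ⊓
        M.final (p (Fin.last w.length)) := by
      rw [h2, h1, h0, hr0]
    rw [this]
    exact le_iSup (fun p : Fin (w.length + 1) → Q => M.init (p 0) ⊓
      (⨅ i : Fin w.length, M.δ (p i.castSucc) (w.get i) (p i.succ)) ⊓
      M.final (p (Fin.last w.length))) p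

end OMLHelpers


lemma OML.foldl_take_succ {σ A : Type*} (f : σ → A → σ) (s : σ) (w : List A) (j : Fin w.length) :
    (w.take (j + 1)).foldl f s = f ((w.take j).foldl f s) (w.get j) := by
  rw [List.take_succ, List.foldl_append, List.getElem?_eq_getElem j.isLt]
  rfl

lemma OML.evalFrom_take_succ {σ A : Type*} (D : DFA A σ) (s : σ) (w : List A)
    (j : Fin w.length) :
    D.evalFrom s (w.take (↑j + 1)) = D.step (D.evalFrom s (w.take ↑j)) (w.get j) :=
  OML.foldl_take_succ D.step s w j

lemma OML.sup_char_isLRegular {A l : Type*} [OrthomodularCompleteLattice l]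
    (m : ℕ) (k : Fin m → l) (L : Fin m → Language A)
    (hreg : ∀ i, (L i).IsRegular) :
    IsLRegular (fun w => ⨆ i, ⨆ _ : w ∈ L i, k i) := by
  classical
  choose σ hfin D hD using hreg
  haveI := hfin
  refine ⟨(i : Fin m) × σ i, inferInstance, ?_⟩
  refine ⟨{ δ := fun q a q' => if q' = ⟨q.1, (D q.1).step q.2 a⟩ then (⊤ : l) else ⊥,
            init := fun q => if q.2 = (D q.1).start then (⊤ : l) else ⊥,
            final := fun q => if q.2 ∈ (D q.1).accept then k q.1 else ⊥ }, fun w => ?_⟩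
  set M : LVFA ((i : Fin m) × σ i) A l :=
    { δ := fun q a q' => if q' = ⟨q.1, (D q.1).step q.2 a⟩ then (⊤ : l) else ⊥,
      init := fun q => if q.2 = (D q.1).start then (⊤ : l) else ⊥,
      final := fun q => if q.2 ∈ (D q.1).accept then k q.1 else ⊥ } with hMdef
  apply le_antisymm
  · refine iSup_le fun p => ?_
    by_cases h1 : M.init (p 0) = ⊥
    · rw [h1]
      simp
    by_cases h2 : ∀ j : Fin w.length, M.δ (p j.castSucc) (w.get j) (p j.succ) ≠ ⊥
    case neg =>
      push_neg at h2
      obtain ⟨j, hj⟩ := h2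
      refine le_trans (le_trans inf_le_left inf_le_right) (le_trans (iInf_le _ j) ?_)
      rw [hj]
      exact bot_le
    have hp0 : (p 0).2 = (D (p 0).1).start := by
      by_contra hne
      exact h1 (if_neg hne)
    have key : ∀ j : Fin (w.length + 1),
        p j = ⟨(p 0).1, (D (p 0).1).evalFrom (D (p 0).1).start (w.take j)⟩ := by
      intro j
      induction j using Fin.induction with
      | zero =>
        simp only [Fin.val_zero, List.take_zero, DFA.evalFrom_nil]
        rw [← hp0]
      | succ j ih =>
        have hδ := h2 j
        rw [ih] at hδ
        have hstep : p j.succ =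
            ⟨(p 0).1, (D (p 0).1).step ((D (p 0).1).evalFrom (D (p 0).1).start (w.take j))
              (w.get j)⟩ := by
          by_contra hne
          exact hδ (if_neg hne)
        rw [hstep]
        simp only [Fin.val_succ]
        rw [OML.evalFrom_take_succ]
    refine le_trans inf_le_right ?_
    rw [key (Fin.last w.length)]
    simp only [Fin.val_last, List.take_length]
    by_cases hacc : (D (p 0).1).evalFrom (D (p 0).1).start w ∈ (D (p 0).1).accept
    · have hw : w ∈ L (p 0).1 := by
        rw [← hD]
        exact hacc
      rw [show M.final _ = k (p 0).1 from if_pos hacc]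
      exact le_iSup₂_of_le (p 0).1 hw le_rfl
    · rw [show M.final _ = ⊥ from if_neg hacc]
      exact bot_le
  · refine iSup₂_le fun i hw => ?_
    set p : Fin (w.length + 1) → (i : Fin m) × σ i :=
      fun j => ⟨i, (D i).evalFrom (D i).start (w.take j)⟩ with hp
    have h0 : M.init (p 0) = ⊤ := by
      refine if_pos ?_
      rfl
    have hterm : ∀ j : Fin w.length, M.δ (p j.castSucc) (w.get j) (p j.succ) = ⊤ := by
      intro j
      refine if_pos ?_
      simp only [hp, Fin.val_succ, Fin.coe_castSucc]
      rw [OML.evalFrom_take_succ]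
      rfl
    have hfin : M.final (p (Fin.last w.length)) = k i := by
      refine if_pos ?_
      show (D i).evalFrom (D i).start (w.take w.length) ∈ (D i).accept
      rw [List.take_length]
      rw [← hD i] at hw
      exact hw
    have : (k i : l) = M.init (p 0) ⊓
        (⨅ j : Fin w.length, M.δ (p j.castSucc) (w.get j) (p j.succ)) ⊓
        M.final (p (Fin.last w.length)) := by
      rw [h0, hfin, show (⨅ j : Fin w.length, M.δ (p j.castSucc) (w.get j) (p j.succ)) = ⊤ from
        le_antisymm le_top (le_iInf fun j => (hterm j).ge), top_inf_eq, top_inf_eq]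
    rw [this]
    exact le_iSup (fun p : Fin (w.length + 1) → (i : Fin m) × σ i => M.init (p 0) ⊓
      (⨅ j : Fin w.length, M.δ (p j.castSucc) (w.get j) (p j.succ)) ⊓
      M.final (p (Fin.last w.length))) p

/-- An `l`-valued language is `l`-regular iff it is a finite join of scalar multiples of
characteristic functions of classical regular languages. -/
theorem lregular_iff_step {l A : Type*} [OrthomodularCompleteLattice l] [Fintype A]
    (f : List A → l) :
    IsLRegular f ↔
      ∃ (m : ℕ) (k : Fin m → l) (L : Fin m → Language A),
        (∀ i, k i ≠ ⊥) ∧ (∀ i, (L i).IsRegular) ∧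
        ∀ w : List A, f w = ⨆ i, ⨆ _ : w ∈ L i, k i := by
  classical
  constructor
  · rintro ⟨Q, instQ, M, hM⟩
    haveI := instQ
    set S : Finset l := (Finset.univ.image M.init ∪
        Finset.univ.image (fun t : Q × A × Q => M.δ t.1 t.2.1 t.2.2)) ∪
        Finset.univ.image M.final with hS
    set T : Finset l := S.powerset.image (fun s => s.inf id) with hT
    have hTmem : ∀ x ∈ S, x ∈ T := fun x hx => Finset.mem_image.2
      ⟨{x}, Finset.mem_powerset.2 (Finset.singleton_subset_iff.2 hx), Finset.inf_singleton⟩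
    have hTinf : ∀ v ∈ T, ∀ x ∈ S, v ⊓ x ∈ T := by
      intro v hv x hx
      obtain ⟨s, hs, rfl⟩ := Finset.mem_image.1 hv
      refine Finset.mem_image.2 ⟨insert x s, ?_, ?_⟩
      · exact Finset.mem_powerset.2 (Finset.insert_subset hx (Finset.mem_powerset.1 hs))
      · rw [Finset.inf_insert]
        exact inf_comm _ _
    have hinitS : ∀ q, M.init q ∈ S := fun q =>
      Finset.mem_union.2 (Or.inl (Finset.mem_union.2 (Or.inl
        (Finset.mem_image.2 ⟨q, Finset.mem_univ q, rfl⟩))))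
    have hδS : ∀ q a q', M.δ q a q' ∈ S := fun q a q' =>
      Finset.mem_union.2 (Or.inl (Finset.mem_union.2 (Or.inr
        (Finset.mem_image.2 ⟨(q, a, q'), Finset.mem_univ _, rfl⟩))))
    have hfinS : ∀ q, M.final q ∈ S := fun q =>
      Finset.mem_union.2 (Or.inr (Finset.mem_image.2 ⟨q, Finset.mem_univ q, rfl⟩))
    have hreachT : ∀ (w : List A) (s : Set (Q × l)), (∀ r ∈ s, r.2 ∈ T) →
        ∀ r ∈ w.foldl (OML.lstep M) s, r.2 ∈ T := by
      intro w
      induction w with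
      | nil => exact fun s hs r hr => hs r hr
      | cons a w ih =>
        intro s hs r hr
        rw [List.foldl_cons] at hr
        refine ih _ ?_ r hr
        rintro r' ⟨r0, hr0, heq⟩
        rw [heq]
        exact hTinf _ (hs r0 hr0) _ (hδS _ _ _)
    have hreachT' : ∀ (w : List A), ∀ r ∈ OML.reachSet M w, r.2 ∈ T := by
      intro w r hr
      refine hreachT w _ ?_ r hr
      intro r' hr'
      rw [Set.mem_setOf_eq] at hr'
      rw [hr']
      exact hTmem _ (hinitS _)
    set T' : Finset l := T.erase ⊥ with hT'
    refine ⟨T'.card, fun i => ↑(T'.equivFin.symm i),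
      fun i => {w | ∃ r ∈ OML.reachSet M w, r.2 ⊓ M.final r.1 = ↑(T'.equivFin.symm i)},
      fun i => (Finset.mem_erase.1 (T'.equivFin.symm i).2).1, ?_, ?_⟩
    · intro i
      refine ⟨Set (Q × Fin T.card), inferInstance,
        { step := fun s a => {r | ∃ r0 ∈ s,
            (T.equivFin.symm r.2 : l) = ↑(T.equivFin.symm r0.2) ⊓ M.δ r0.1 a r.1},
          start := {r | (T.equivFin.symm r.2 : l) = M.init r.1},
          accept := {s | ∃ r ∈ s,
            (T.equivFin.symm r.2 : l) ⊓ M.final r.1 = ↑(T'.equivFin.symm i)} }, ?_⟩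
      set D : DFA A (Set (Q × Fin T.card)) :=
        { step := fun s a => {r | ∃ r0 ∈ s,
            (T.equivFin.symm r.2 : l) = ↑(T.equivFin.symm r0.2) ⊓ M.δ r0.1 a r.1},
          start := {r | (T.equivFin.symm r.2 : l) = M.init r.1},
          accept := {s | ∃ r ∈ s,
            (T.equivFin.symm r.2 : l) ⊓ M.final r.1 = ↑(T'.equivFin.symm i)} } with hDdef
      set c : Set (Q × Fin T.card) → Set (Q × l) :=
        fun s => (fun r : Q × Fin T.card => ((r.1 : Q), (T.equivFin.symm r.2 : l))) '' s with hc
      have hstep : ∀ s a, c (D.step s a) = OML.lstep M (c s) a := by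
        intro s a
        ext r
        constructor
        · rintro ⟨r', ⟨r0, hr0, hval⟩, rfl⟩
          exact ⟨(r0.1, ↑(T.equivFin.symm r0.2)), ⟨r0, hr0, rfl⟩, hval⟩
        · rintro ⟨r0', ⟨r0, hr0, rfl⟩, hval⟩
          have hmem : r.2 ∈ T := by
            rw [hval]
            exact hTinf _ (T.equivFin.symm r0.2).2 _ (hδS _ _ _)
          have hco : (T.equivFin.symm (T.equivFin ⟨r.2, hmem⟩) : l) = r.2 := by
            rw [Equiv.symm_apply_apply]
          refine ⟨(r.1, T.equivFin ⟨r.2, hmem⟩), ⟨r0, hr0, ?_⟩, ?_⟩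
          · rw [hco]
            exact hval
          · exact Prod.ext rfl hco
      have hstart : c D.start = {r : Q × l | r.2 = M.init r.1} := by
        ext r
        constructor
        · rintro ⟨r', hr', rfl⟩
          exact hr'
        · intro hr
          have hmem : r.2 ∈ T := by
            rw [hr]
            exact hTmem _ (hinitS _)
          have hco : (T.equivFin.symm (T.equivFin ⟨r.2, hmem⟩) : l) = r.2 := by
            rw [Equiv.symm_apply_apply]
          refine ⟨(r.1, T.equivFin ⟨r.2, hmem⟩), ?_, Prod.ext rfl hco⟩
          show (T.equivFin.symm (T.equivFin ⟨r.2, hmem⟩) : l) = M.init r.1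
          rw [hco, hr]
      have heval : ∀ (w : List A) (s : Set (Q × Fin T.card)),
          c (w.foldl D.step s) = w.foldl (OML.lstep M) (c s) := by
        intro w
        induction w with
        | nil => exact fun s => rfl
        | cons a w ih =>
          intro s
          rw [List.foldl_cons, List.foldl_cons, ih, hstep]
      ext w
      rw [DFA.mem_accepts]
      have hreach : c (List.foldl D.step D.start w) = OML.reachSet M w := by
        rw [heval, hstart]
        rfl
      have heq : D.eval w = List.foldl D.step D.start w := rfl
      show (∃ r ∈ D.eval w,
          (T.equivFin.symm r.2 : l) ⊓ M.final r.1 = ↑(T'.equivFin.symm i)) ↔ _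
      rw [heq]
      constructor
      · rintro ⟨r, hr, hval⟩
        refine ⟨(r.1, ↑(T.equivFin.symm r.2)), ?_, hval⟩
        rw [← hreach]
        exact ⟨r, hr, rfl⟩
      · rintro ⟨r', hr', hval⟩
        rw [← hreach] at hr'
        obtain ⟨r, hr, rfl⟩ := hr'
        exact ⟨r, hr, hval⟩
    · intro w
      rw [← hM w, OML.lang_eq_reach]
      apply le_antisymm
      · refine iSup₂_le fun r hr => ?_
        by_cases hb : r.2 ⊓ M.final r.1 = ⊥
        · rw [hb]
          exact bot_le
        · have hvT : r.2 ⊓ M.final r.1 ∈ T' :=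
            Finset.mem_erase.2 ⟨hb, hTinf _ (hreachT' w r hr) _ (hfinS _)⟩
          have hx : r.2 ⊓ M.final r.1 =
              ↑(T'.equivFin.symm (T'.equivFin ⟨r.2 ⊓ M.final r.1, hvT⟩)) := by
            rw [Equiv.symm_apply_apply]
          rw [hx]
          exact le_iSup₂_of_le (T'.equivFin ⟨r.2 ⊓ M.final r.1, hvT⟩)
            ⟨r, hr, by rw [Equiv.symm_apply_apply]⟩ le_rfl
      · refine iSup₂_le fun i hw => ?_
        obtain ⟨r, hr, heq⟩ := hw
        show (T'.equivFin.symm i : l) ≤ _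
        rw [← heq]
        exact le_iSup₂_of_le r hr le_rfl
  · rintro ⟨m, k, L, hk, hreg, hf⟩
    obtain ⟨Q, iQ, M, hM⟩ := OML.sup_char_isLRegular m k L hreg
    exact ⟨Q, iQ, M, fun w => by rw [hM w]; exact (hf w).symm⟩
end

section
/- An l-valued language A : Σ* → l is l-regular if and only if the image set Im(A) is finite, for every r ∈ Im(A)∖{0} the level set A_[r] = { ω ∈ Σ* : A(ω) = r } is a (classical) regular language, and A = ⋁_{r ∈ Im(A)∖{0}} r·1_{A_[r]}. -/
section Aux
variable {Q A l : Type*} [OrthomodularCompleteLattice l]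

private lemma fin_iInf_snoc {n : ℕ} (F : Fin (n+1) → l) :
    ⨅ i, F i = (⨅ i : Fin n, F i.castSucc) ⊓ F (Fin.last n) := by
  apply le_antisymm
  · exact le_inf (le_iInf fun i => iInf_le _ _) (iInf_le _ _)
  · refine le_iInf fun i => ?_
    induction i using Fin.lastCases with
    | last => exact inf_le_right
    | cast i => exact inf_le_left.trans (iInf_le _ i)

def pset {Q A l : Type*} [OrthomodularCompleteLattice l] (M : LVFA Q A l)
    (w : List A) (q : Q) : Set l :=
  {x | ∃ path : Fin (w.length + 1) → Q, path (Fin.last w.length) = q ∧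
    x = M.init (path 0) ⊓ ⨅ i : Fin w.length, M.δ (path i.castSucc) (w.get i) (path i.succ)}

lemma pset_nil (M : LVFA Q A l) (q : Q) : pset M [] q = {M.init q} := by
  ext x
  constructor
  · rintro ⟨path, hlast, rfl⟩
    have h0 : path 0 = q := hlast
    simp [h0, iInf_of_empty]
  · rintro rfl
    exact ⟨fun _ => q, rfl, by simp [iInf_of_empty]⟩

private lemma term_snoc (M : LVFA Q A l) (w : List A) (a : A)
    (path : Fin ((w ++ [a]).length + 1) → Q) :
    (M.init (path 0) ⊓
      ⨅ i : Fin (w ++ [a]).length, M.δ (path i.castSucc) ((w ++ [a]).get i) (path i.succ))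
    = (M.init ((fun k : Fin (w.length + 1) => path (Fin.castLE (by simp) k)) 0) ⊓
        ⨅ i : Fin w.length,
          M.δ ((fun k : Fin (w.length + 1) => path (Fin.castLE (by simp) k)) i.castSucc)
            (w.get i)
            ((fun k : Fin (w.length + 1) => path (Fin.castLE (by simp) k)) i.succ)) ⊓
      M.δ ((fun k : Fin (w.length + 1) => path (Fin.castLE (by simp) k)) (Fin.last w.length))
        a (path (Fin.last (w ++ [a]).length)) := by
  have hl : (w ++ [a]).length = w.length + 1 := by simp
  have key : ∀ (k k' : Fin ((w ++ [a]).length + 1)), k.1 = k'.1 → path k = path k' := by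
    intro k k' h; rw [Fin.ext h]
  have hget1 : ∀ (k : Fin (w ++ [a]).length) (i : Fin w.length), k.1 = i.1 →
      (w ++ [a]).get k = w.get i := by
    intro k i h
    simp only [List.get_eq_getElem, h]
    exact List.getElem_append_left i.isLt
  have hget2 : ∀ (k : Fin (w ++ [a]).length), k.1 = w.length → (w ++ [a]).get k = a := by
    intro k h
    simp only [List.get_eq_getElem]
    exact List.getElem_concat_length (l := w) (a := a) h _
  have hiInf : (⨅ i : Fin (w ++ [a]).length,
      M.δ (path i.castSucc) ((w ++ [a]).get i) (path i.succ))
      = ⨅ j : Fin (w.length + 1), M.δ (path ((finCongr hl).symm j).castSucc)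
          ((w ++ [a]).get ((finCongr hl).symm j)) (path ((finCongr hl).symm j).succ) :=
    (Equiv.iInf_comp (g := fun i : Fin (w ++ [a]).length =>
      M.δ (path i.castSucc) ((w ++ [a]).get i) (path i.succ)) (finCongr hl).symm).symm
  rw [hiInf, fin_iInf_snoc, ← inf_assoc]
  congr 1
  · congr 1
    · refine iInf_congr fun i => ?_
      rw [hget1 ((finCongr hl).symm i.castSucc) i rfl]
      exact congrArg₂ (fun s t => M.δ s (w.get i) t) (key _ _ rfl) (key _ _ rfl)
  · rw [hget2 ((finCongr hl).symm (Fin.last w.length)) rfl]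
    exact congrArg₂ (fun s t => M.δ s a t) (key _ _ rfl) (key _ _ hl.symm)

lemma pset_snoc (M : LVFA Q A l) (w : List A) (a : A) (q' : Q) :
    pset M (w ++ [a]) q' = {x | ∃ q, ∃ y ∈ pset M w q, x = y ⊓ M.δ q a q'} := by
  ext x
  constructor
  · rintro ⟨path, hlast, rfl⟩
    refine ⟨_, _, ⟨fun k => path (Fin.castLE (by simp) k), rfl, rfl⟩, ?_⟩
    rw [term_snoc M w a path, hlast]
  · rintro ⟨q, y, ⟨p, hplast, rfl⟩, rfl⟩
    refine ⟨fun k => if h : k.1 < w.length + 1 then p ⟨k.1, h⟩ else q', ?_, ?_⟩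
    · have h1 : ¬ (Fin.last (w ++ [a]).length).1 < w.length + 1 := by simp
      simp only [h1, dif_neg, not_false_iff]
    · rw [term_snoc M w a (fun k => if h : k.1 < w.length + 1 then p ⟨k.1, h⟩ else q')]
      have hp : ∀ k : Fin (w.length + 1),
          (fun k' : Fin ((w ++ [a]).length + 1) =>
            if h : k'.1 < w.length + 1 then p ⟨k'.1, h⟩ else q')
            (Fin.castLE (by simp) k) = p k := by
        intro k
        simp [k.isLt]
      simp only [hp]
      rw [hplast]
      have h1 : ¬ (Fin.last (w ++ [a]).length).1 < w.length + 1 := by simp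
      simp only [h1, dif_neg, not_false_iff]

lemma lvfaLang_eq_sSup (M : LVFA Q A l) (w : List A) :
    lvfaLang M w = sSup {x | ∃ q, ∃ y ∈ pset M w q, x = y ⊓ M.final q} := by
  apply le_antisymm
  · refine iSup_le fun path => le_sSup ?_
    exact ⟨path (Fin.last w.length), _, ⟨path, rfl, rfl⟩, rfl⟩
  · refine sSup_le ?_
    rintro x ⟨q, y, ⟨path, hlast, rfl⟩, rfl⟩
    exact le_iSup_of_le path (le_of_eq (by rw [hlast]))

end Aux

section Forward
variable {Q A l : Type*} [OrthomodularCompleteLattice l]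

/-- The subset-construction DFA tracking the sets of partial path values. -/
def levelDFA (M : LVFA Q A l) {m : ℕ} (ι : Fin m → l) (r : l) :
    DFA A (Q → Set (Fin m)) where
  step h a q' := {j' | ∃ q, ∃ j ∈ h q, ι j' = ι j ⊓ M.δ q a q'}
  start q := {j | ι j = M.init q}
  accept := {h | sSup {x | ∃ q, ∃ j ∈ h q, x = ι j ⊓ M.final q} = r}

lemma levelDFA_eval (M : LVFA Q A l) {m : ℕ} (ι : Fin m → l) (r : l)
    (hinit : ∀ q, M.init q ∈ Set.range ι)
    (hstep : ∀ (j : Fin m) (q : Q) (a : A) (q' : Q), ι j ⊓ M.δ q a q' ∈ Set.range ι) :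
    ∀ (w : List A) (q : Q), ι '' ((levelDFA M ι r).eval w q) = pset M w q := by
  intro w
  induction w using List.reverseRecOn with
  | nil =>
    intro q
    rw [pset_nil]
    ext x
    constructor
    · rintro ⟨j, hj, rfl⟩
      exact hj
    · rintro rfl
      obtain ⟨j, hj⟩ := hinit q
      exact ⟨j, hj, hj⟩
  | append_singleton w a IH =>
    intro q'
    rw [pset_snoc, DFA.eval_append_singleton]
    ext x
    constructor
    · rintro ⟨j', ⟨q, j, hj, hval⟩, rfl⟩
      refine ⟨q, ι j, ?_, hval⟩
      rw [← IH q]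
      exact ⟨j, hj, rfl⟩
    · rintro ⟨q, y, hy, rfl⟩
      rw [← IH q] at hy
      obtain ⟨j, hj, rfl⟩ := hy
      obtain ⟨j', hj'⟩ := hstep j q a q'
      exact ⟨j', ⟨q, j, hj, hj'⟩, hj'⟩

lemma lvfaLang_eq_levelDFA (M : LVFA Q A l) {m : ℕ} (ι : Fin m → l) (r : l)
    (hinit : ∀ q, M.init q ∈ Set.range ι)
    (hstep : ∀ (j : Fin m) (q : Q) (a : A) (q' : Q), ι j ⊓ M.δ q a q' ∈ Set.range ι)
    (w : List A) :
    lvfaLang M w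
      = sSup {x | ∃ q, ∃ j ∈ (levelDFA M ι r).eval w q, x = ι j ⊓ M.final q} := by
  rw [lvfaLang_eq_sSup]
  congr 1
  ext x
  constructor
  · rintro ⟨q, y, hy, rfl⟩
    rw [← levelDFA_eval M ι r hinit hstep w q] at hy
    obtain ⟨j, hj, rfl⟩ := hy
    exact ⟨q, j, hj, rfl⟩
  · rintro ⟨q, j, hj, rfl⟩
    refine ⟨q, ι j, ?_, rfl⟩
    rw [← levelDFA_eval M ι r hinit hstep w q]
    exact ⟨j, hj, rfl⟩

end Forward

section Backward
variable {A l : Type*} [OrthomodularCompleteLattice l]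

open Classical in
/-- Disjoint union of DFAs viewed as an `l`-VFA, with value `val i` on component `i`. -/
noncomputable def sumLVFA {I : Type} (σ : I → Type) (D : ∀ i, DFA A (σ i)) (val : I → l) :
    LVFA ((i : I) × σ i) A l where
  δ p a p' := if p' = ⟨p.1, (D p.1).step p.2 a⟩ then ⊤ else ⊥
  init p := if p.2 = (D p.1).start then ⊤ else ⊥
  final p := if p.2 ∈ (D p.1).accept then val p.1 else ⊥

lemma sumLVFA_lang {I : Type} (σ : I → Type) (D : ∀ i, DFA A (σ i)) (val : I → l)
    (f : List A → l) (hval : ∀ i, (D i).accepts = {w | f w = val i})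
    (hex : ∀ w, f w ≠ ⊥ → ∃ i, val i = f w) :
    ∀ w, lvfaLang (sumLVFA σ D val) w = f w := by
  intro w
  apply le_antisymm
  · refine iSup_le fun path => ?_
    by_cases hacc : (path (Fin.last w.length)).2 ∈ (D (path (Fin.last w.length)).1).accept
    swap
    · refine inf_le_right.trans ?_
      simp [sumLVFA, hacc]
    by_cases h0 : (path 0).2 = (D (path 0).1).start
    swap
    · refine (inf_le_left.trans inf_le_left).trans ?_
      simp [sumLVFA, h0]
    by_cases hstep : ∀ k : Fin w.length,
        path k.succ
          = ⟨(path k.castSucc).1, (D (path k.castSucc).1).step (path k.castSucc).2 (w.get k)⟩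
    swap
    · push_neg at hstep
      obtain ⟨k, hk⟩ := hstep
      refine (inf_le_left.trans (inf_le_right.trans (iInf_le _ k))).trans ?_
      simp only [List.get_eq_getElem] at hk
      simp [sumLVFA, hk]
    · have hpath : ∀ (mm : ℕ) (hmm : mm < w.length + 1),
          path ⟨mm, hmm⟩
            = ⟨(path 0).1, (D (path 0).1).evalFrom (D (path 0).1).start (w.take mm)⟩ := by
        intro mm
        induction mm with
        | zero =>
          intro hmm
          have h00 : (⟨0, hmm⟩ : Fin (w.length + 1)) = 0 := rfl
          rw [h00, List.take_zero]
          exact Sigma.ext rfl (heq_of_eq h0)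
        | succ mm IH =>
          intro hmm
          have hmm' : mm < w.length := by omega
          have h1 : (⟨mm + 1, hmm⟩ : Fin (w.length + 1)) = (⟨mm, hmm'⟩ : Fin w.length).succ :=
            rfl
          have h2 : (⟨mm, hmm'⟩ : Fin w.length).castSucc
              = (⟨mm, by omega⟩ : Fin (w.length + 1)) := rfl
          rw [h1, hstep ⟨mm, hmm'⟩, h2, IH (by omega)]
          have h3 : (D (path 0).1).step
                ((D (path 0).1).evalFrom (D (path 0).1).start (w.take mm)) (w.get ⟨mm, hmm'⟩)
              = (D (path 0).1).evalFrom (D (path 0).1).start (w.take (mm + 1)) := by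
            rw [← List.take_concat_get' w mm hmm', DFA.evalFrom_append_singleton]
            rfl
          exact congrArg (fun s => (⟨(path 0).1, s⟩ : (i : I) × σ i)) h3
      have hlastval : path (Fin.last w.length)
          = ⟨(path 0).1, (D (path 0).1).eval w⟩ := by
        have h := hpath w.length (by omega)
        rw [List.take_length] at h
        exact h
      rw [hlastval] at hacc
      have hfw : f w = val (path 0).1 := by
        have hw : w ∈ (D (path 0).1).accepts := by
          rw [DFA.mem_accepts]
          exact hacc
        rw [hval (path 0).1] at hw
        exact hw
      refine inf_le_right.trans ?_
      rw [hlastval]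
      have : (sumLVFA σ D val).final ⟨(path 0).1, (D (path 0).1).eval w⟩
          = val (path 0).1 := if_pos hacc
      rw [this, hfw]
  · by_cases hbot : f w = ⊥
    · rw [hbot]; exact bot_le
    obtain ⟨i0, hi0⟩ := hex w hbot
    have hw : w ∈ (D i0).accepts := by
      rw [hval i0]
      exact hi0.symm
    have hacc : (D i0).evalFrom (D i0).start w ∈ (D i0).accept :=
      (DFA.mem_accepts _).mp hw
    refine le_trans ?_ (le_iSup _
      (fun k : Fin (w.length + 1) =>
        (⟨i0, (D i0).evalFrom (D i0).start (w.take k.1)⟩ : (i : I) × σ i)))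
    refine le_inf (le_inf ?_ ?_) ?_
    · simp [sumLVFA]
    · refine le_iInf fun k => ?_
      have hcond : (⟨i0, (D i0).evalFrom (D i0).start (w.take (k.1 + 1))⟩ : (i : I) × σ i)
          = ⟨i0, (D i0).step ((D i0).evalFrom (D i0).start (w.take k.1)) (w.get k)⟩ := by
        refine congrArg (fun s => (⟨i0, s⟩ : (i : I) × σ i)) ?_
        rw [← List.take_concat_get' w k.1 k.isLt, DFA.evalFrom_append_singleton]
        rfl
      simp [sumLVFA, hcond]
    · simp only [Fin.val_last, List.take_length]
      have : (sumLVFA σ D val).final ⟨i0, (D i0).evalFrom (D i0).start w⟩ = val i0 :=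
        if_pos hacc
      rw [this, hi0]

end Backward

private lemma sup_levels {A l : Type*} [OrthomodularCompleteLattice l] (f : List A → l)
    (w : List A) :
    (⨆ r ∈ Set.range f, ⨆ _ : r ≠ ⊥, ⨆ _ : f w = r, r) = f w := by
  apply le_antisymm
  · refine iSup_le fun r => iSup_le fun hr => iSup_le fun hne => iSup_le fun hw => le_of_eq hw.symm
  · by_cases h : f w = ⊥
    · rw [h]; exact bot_le
    · exact le_iSup_of_le (f w) (le_iSup_of_le ⟨w, rfl⟩ (le_iSup_of_le h (le_iSup_of_le rfl le_rfl)))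


/-- Level-set characterization of `l`-regular languages. -/
theorem lregular_iff_levels {l A : Type*} [OrthomodularCompleteLattice l] [Fintype A]
    (f : List A → l) :
    IsLRegular f ↔
      (Set.range f).Finite ∧
      (∀ r ∈ Set.range f, r ≠ ⊥ → Language.IsRegular {w : List A | f w = r}) ∧
      ∀ w : List A, f w = ⨆ r ∈ Set.range f, ⨆ _ : r ≠ ⊥, ⨆ _ : f w = r, r := by
  constructor
  · rintro ⟨Q, instQ, M, hM⟩
    haveI := instQ
    classical
    set B := Set.range M.init ∪ Set.range (fun p : Q × A × Q => M.δ p.1 p.2.1 p.2.2)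
      with hBdef
    have hBfin : B.Finite := (Set.finite_range _).union (Set.finite_range _)
    have hTfin : (sInf '' {s : Set l | s ⊆ B}).Finite := hBfin.finite_subsets.image _
    haveI := hTfin.fintype
    obtain ⟨m, ι, hι⟩ :
        ∃ (m : ℕ) (ι : Fin m → l), Set.range ι = sInf '' {s : Set l | s ⊆ B} := by
      refine ⟨Fintype.card ↥(sInf '' {s : Set l | s ⊆ B}),
        fun j => ((Fintype.equivFin ↥(sInf '' {s : Set l | s ⊆ B})).symm j : l), ?_⟩
      ext x
      constructor
      · rintro ⟨j, rfl⟩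
        exact ((Fintype.equivFin ↥(sInf '' {s : Set l | s ⊆ B})).symm j).2
      · intro hx
        exact ⟨Fintype.equivFin ↥(sInf '' {s : Set l | s ⊆ B}) ⟨x, hx⟩, by simp⟩
    have hinit : ∀ q, M.init q ∈ Set.range ι := by
      intro q
      rw [hι]
      exact ⟨{M.init q}, Set.singleton_subset_iff.mpr
        (hBdef ▸ Set.mem_union_left _ ⟨q, rfl⟩), sInf_singleton⟩
    have hstep : ∀ (j : Fin m) (q : Q) (a : A) (q' : Q), ι j ⊓ M.δ q a q' ∈ Set.range ι := by
      intro j q a q'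
      have hj : ι j ∈ Set.range ι := ⟨j, rfl⟩
      rw [hι] at hj ⊢
      obtain ⟨s, hs, hseq⟩ := hj
      refine ⟨insert (M.δ q a q') s, Set.insert_subset_iff.mpr
        ⟨hBdef ▸ Set.mem_union_right _ ⟨⟨q, a, q'⟩, rfl⟩, hs⟩, ?_⟩
      rw [sInf_insert, inf_comm, hseq]
    refine ⟨?_, ?_, ?_⟩
    · have hU : (Set.range (fun p : Fin m × Q => ι p.1 ⊓ M.final p.2)).Finite :=
        Set.finite_range _
      refine Set.Finite.subset (hU.finite_subsets.image sSup) ?_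
      rintro x ⟨w, rfl⟩
      refine ⟨{x | ∃ q, ∃ j ∈ (levelDFA M ι ⊥).eval w q, x = ι j ⊓ M.final q}, ?_, ?_⟩
      · rintro y ⟨q, j, hj, rfl⟩
        exact ⟨(j, q), rfl⟩
      · rw [← lvfaLang_eq_levelDFA M ι ⊥ hinit hstep w, hM w]
    · intro r _ _
      refine ⟨Q → Set (Fin m), inferInstance, levelDFA M ι r, ?_⟩
      ext w
      show (sSup {x | ∃ q, ∃ j ∈ (levelDFA M ι r).eval w q, x = ι j ⊓ M.final q} = r)
        ↔ (f w = r)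
      rw [← lvfaLang_eq_levelDFA M ι r hinit hstep w, hM w]
    · intro w
      exact (sup_levels f w).symm
  · rintro ⟨hfin, hreg, -⟩
    classical
    have hfin2 : {r : l | r ∈ Set.range f ∧ r ≠ ⊥}.Finite := hfin.subset fun x hx => hx.1
    haveI : Fintype ↥{r : l | r ∈ Set.range f ∧ r ≠ ⊥} := hfin2.fintype
    choose σ σfin D hD using fun i : ↥{r : l | r ∈ Set.range f ∧ r ≠ ⊥} =>
      hreg i.1 i.2.1 i.2.2
    haveI : ∀ i, Fintype (σ i) := σfin
    set e := (Fintype.equivFin ↥{r : l | r ∈ Set.range f ∧ r ≠ ⊥}).symm with hedef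
    refine ⟨(j : Fin (Fintype.card ↥{r : l | r ∈ Set.range f ∧ r ≠ ⊥})) × σ (e j),
      inferInstance,
      sumLVFA (fun j => σ (e j)) (fun j => D (e j)) (fun j => ((e j).1 : l)), ?_⟩
    refine sumLVFA_lang _ _ _ f (fun j => hD (e j)) ?_
    intro w hw
    refine ⟨e.symm ⟨f w, ⟨w, rfl⟩, hw⟩, ?_⟩
    rw [Equiv.apply_symm_apply]
end

section
/- If A and B are l-regular languages over Σ, then their intersection A ∧ B, defined by (A ∧ B)(ω) = A(ω) ∧ B(ω), is an l-regular language. -/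
-- determinization
noncomputable def detD {Q : Type*} {A l : Type*} [OrthomodularCompleteLattice l] [Fintype A]
    (M : LVFA Q A l) : LVDFA (Set (Q × Q × Set (Q × Fin (Fintype.card A) × Q))) A l where
  next X a := {d | ∃ c ∈ X, ∃ q' : Q, d = (c.1, q', insert (c.2.1, Fintype.equivFin A a, q') c.2.2)}
  start := {c | ∃ q, c = (q, q, (∅ : Set (Q × Fin (Fintype.card A) × Q)))}
  final X := ⨆ c ∈ X, M.init c.1 ⊓
      (⨅ t ∈ c.2.2, M.δ t.1 ((Fintype.equivFin A).symm t.2.1) t.2.2) ⊓ M.final c.2.1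

lemma det_foldl {Q A l : Type*} [OrthomodularCompleteLattice l] [Fintype A]
    (M : LVFA Q A l) (w : List A) :
    ∀ X, List.foldl (detD M).next X w =
      {d | ∃ c ∈ X, ∃ path : Fin (w.length + 1) → Q, path 0 = c.2.1 ∧
        d = (c.1, path (Fin.last w.length),
          c.2.2 ∪ Set.range (fun i : Fin w.length =>
            (path i.castSucc, Fintype.equivFin A (w.get i), path i.succ)))} := by
  induction w with
  | nil =>
      intro X
      simp only [List.foldl_nil]
      ext d
      constructor
      · intro hd
        refine ⟨d, hd, fun _ => d.2.1, rfl, ?_⟩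
        simp
      · rintro ⟨c, hc, path, hp0, rfl⟩
        simpa [hp0] using hc
  | cons a w ih =>
      intro X
      set eA := Fintype.equivFin A with heA
      have key : ∀ (path' : Fin (w.length + 1 + 1) → Q) (path : Fin (w.length + 1) → Q),
          (∀ i, path i = path' i.succ) →
          (fun i : Fin (w.length + 1) =>
              (path' i.castSucc, eA ((a :: w).get i), path' i.succ)) =
            Fin.cons (path' 0, eA a, path 0)
              (fun i : Fin w.length => (path i.castSucc, eA (w.get i), path i.succ)) := by
        intro path' path h
        funext j
        refine Fin.cases ?_ ?_ j
        · simp [h]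
        · intro i
          simp [h]
      simp only [List.foldl_cons]
      rw [ih]
      ext d
      simp only [List.length_cons, Set.mem_setOf_eq]
      constructor
      · rintro ⟨c', ⟨c, hcX, q', rfl⟩, path, hp0, rfl⟩
        dsimp only at hp0 ⊢
        refine ⟨c, hcX, Fin.cons c.2.1 path, by simp, ?_⟩
        have hpath : ∀ i, path i = (Fin.cons c.2.1 path : Fin (w.length+1+1) → Q) i.succ := by
          intro i; rw [Fin.cons_succ]
        rw [key (Fin.cons c.2.1 path) path hpath]
        simp only [Fin.range_cons, Fin.cons_zero, ← Fin.succ_last, Fin.cons_succ, hp0,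
          Set.union_insert, Set.insert_union]
        rfl
      · rintro ⟨c, hcX, path', hp0, rfl⟩
        refine ⟨(c.1, path' (0 : Fin (w.length+1)).succ,
            insert (c.2.1, eA a, path' (0 : Fin (w.length+1)).succ) c.2.2),
          ⟨c, hcX, path' (0 : Fin (w.length+1)).succ, rfl⟩, fun i => path' i.succ, rfl, ?_⟩
        dsimp only
        rw [key path' (fun i => path' i.succ) (fun i => rfl)]
        simp only [Fin.range_cons, hp0, ← Fin.succ_last,
          Set.union_insert, Set.insert_union]

lemma det_correct {Q A l : Type*} [OrthomodularCompleteLattice l] [Fintype A]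
    (M : LVFA Q A l) (w : List A) : lvdfaLang (detD M) w = lvfaLang M w := by
  show (detD M).final (List.foldl (detD M).next (detD M).start w) = lvfaLang M w
  rw [det_foldl M w ((detD M).start)]
  show (⨆ c ∈ {d : Q × Q × Set (Q × Fin (Fintype.card A) × Q) |
        ∃ c ∈ (detD M).start, ∃ path : Fin (w.length + 1) → Q, path 0 = c.2.1 ∧
          d = (c.1, path (Fin.last w.length),
            c.2.2 ∪ Set.range (fun i : Fin w.length =>
              (path i.castSucc, Fintype.equivFin A (w.get i), path i.succ)))},
      M.init c.1 ⊓
        (⨅ t ∈ c.2.2, M.δ t.1 ((Fintype.equivFin A).symm t.2.1) t.2.2) ⊓ M.final c.2.1)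
    = lvfaLang M w
  rw [lvfaLang]
  apply le_antisymm
  · refine iSup₂_le fun d hd => ?_
    obtain ⟨c, ⟨q, rfl⟩, path, hp0, rfl⟩ := hd
    dsimp only at hp0 ⊢
    have h1 : (⨅ t ∈ ((∅ : Set (Q × Fin (Fintype.card A) × Q)) ∪
          Set.range fun i : Fin w.length =>
            (path i.castSucc, Fintype.equivFin A (w.get i), path i.succ)),
          M.δ t.1 ((Fintype.equivFin A).symm t.2.1) t.2.2)
        = ⨅ i : Fin w.length, M.δ (path i.castSucc) (w.get i) (path i.succ) := by
      rw [Set.empty_union, iInf_range]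
      simp
    rw [h1, ← hp0]
    exact le_iSup (fun path : Fin (w.length + 1) → Q => M.init (path 0) ⊓
      (⨅ i : Fin w.length, M.δ (path i.castSucc) (w.get i) (path i.succ)) ⊓
      M.final (path (Fin.last w.length))) path
  · refine iSup_le fun path => ?_
    refine le_iSup₂_of_le ((path 0 : Q), path (Fin.last w.length),
        Set.range fun i : Fin w.length =>
          (path i.castSucc, Fintype.equivFin A (w.get i), path i.succ))
      ⟨(path 0, path 0, ∅), ⟨path 0, rfl⟩, path, rfl, by simp⟩ (le_of_eq ?_)
    dsimp only
    rw [iInf_range]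
    simp

-- DFA languages are l-regular
lemma dfa_to_vfa {Q A l : Type*} [OrthomodularCompleteLattice l]
    (D : LVDFA Q A l) :
    ∃ M : LVFA Q A l, ∀ w, lvfaLang M w = lvdfaLang D w := by
  classical
  refine ⟨⟨fun q a q' => if D.next q a = q' then ⊤ else ⊥,
    fun q => if q = D.start then ⊤ else ⊥, D.final⟩, fun w => ?_⟩
  have hstep : ∀ i : Fin w.length,
      D.next (List.foldl D.next D.start (List.take i.castSucc.val w)) (w.get i)
        = List.foldl D.next D.start (List.take i.succ.val w) := by
    intro i
    have ht : List.take (i.val + 1) w = List.take i.val w ++ [w.get i] := by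
      rw [List.take_succ]
      simp [List.getElem?_eq_getElem i.isLt]
    rw [Fin.coe_castSucc, Fin.val_succ, ht, List.foldl_append]
    rfl
  have hrun : ∀ (path : Fin (w.length + 1) → Q), path 0 = D.start →
      (∀ i : Fin w.length, D.next (path i.castSucc) (w.get i) = path i.succ) →
      ∀ j : Fin (w.length + 1), path j = List.foldl D.next D.start (w.take j.val) := by
    intro path h0 hs
    refine Fin.induction ?_ ?_
    · simpa using h0
    · intro i ihi
      rw [← hs i, ihi]
      exact hstep i
  rw [lvfaLang]
  apply le_antisymm
  · refine iSup_le fun path => ?_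
    dsimp only
    by_cases h0 : path 0 = D.start
    · by_cases hs : ∀ i : Fin w.length, D.next (path i.castSucc) (w.get i) = path i.succ
      · have hlast : path (Fin.last w.length) = List.foldl D.next D.start w := by
          rw [hrun path h0 hs (Fin.last w.length)]
          simp
        rw [lvdfaLang, ← hlast]
        exact inf_le_right
      · push_neg at hs
        obtain ⟨i, hi⟩ := hs
        refine le_trans (le_trans inf_le_left ?_) bot_le
        refine le_trans inf_le_right ?_
        refine le_trans (iInf_le _ i) ?_
        rw [if_neg hi]
    · rw [if_neg h0]
      simp
  · refine le_trans ?_ (le_iSup _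
      (fun j : Fin (w.length + 1) => List.foldl D.next D.start (List.take j.val w)))
    dsimp only
    have e1 : List.foldl D.next D.start (List.take ((Fin.last w.length)).val w)
        = List.foldl D.next D.start w := by simp
    rw [e1]
    have e2 : (if List.foldl D.next D.start (List.take ((0 : Fin (w.length + 1))).val w)
        = D.start then (⊤ : l) else ⊥) = ⊤ := by simp
    rw [e2]
    have e3 : (⨅ i : Fin w.length,
        if D.next (List.foldl D.next D.start (List.take (i.castSucc.val) w)) (w.get i)
          = List.foldl D.next D.start (List.take i.succ.val w) then (⊤ : l) else ⊥) = ⊤ :=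
      top_unique (le_iInf fun i => by rw [if_pos (hstep i)])
    rw [e3]
    simp [lvdfaLang]

-- product of DFAs
def prodD {Q1 Q2 A l : Type*} [OrthomodularCompleteLattice l]
    (D1 : LVDFA Q1 A l) (D2 : LVDFA Q2 A l) : LVDFA (Q1 × Q2) A l where
  next p a := (D1.next p.1 a, D2.next p.2 a)
  start := (D1.start, D2.start)
  final p := D1.final p.1 ⊓ D2.final p.2

lemma prodD_lang {Q1 Q2 A l : Type*} [OrthomodularCompleteLattice l]
    (D1 : LVDFA Q1 A l) (D2 : LVDFA Q2 A l) (w : List A) :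
    lvdfaLang (prodD D1 D2) w = lvdfaLang D1 w ⊓ lvdfaLang D2 w := by
  have key : ∀ (s1 : Q1) (s2 : Q2), List.foldl (prodD D1 D2).next (s1, s2) w
      = (List.foldl D1.next s1 w, List.foldl D2.next s2 w) := by
    induction w with
    | nil => intro s1 s2; rfl
    | cons a w ih => intro s1 s2; simp only [List.foldl_cons]; exact ih _ _
  show (prodD D1 D2).final (List.foldl (prodD D1 D2).next (D1.start, D2.start) w) = _
  rw [key]
  rfl

/-- `l`-regular languages are closed under intersection. -/
theorem lregular_inter {l A : Type*} [OrthomodularCompleteLattice l] [Fintype A]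
    (f g : List A → l) (hf : IsLRegular f) (hg : IsLRegular g) :
    IsLRegular (fun w => f w ⊓ g w) := by
  classical
  obtain ⟨Q1, i1, M1, h1⟩ := hf
  obtain ⟨Q2, i2, M2, h2⟩ := hg
  haveI := i1; haveI := i2
  obtain ⟨M, hM⟩ := dfa_to_vfa (prodD (detD M1) (detD M2))
  refine ⟨_, inferInstance, M, fun w => ?_⟩
  rw [hM, prodD_lang, det_correct, det_correct, h1, h2]
end
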